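/- arXiv:2409.02204 — 4 statements merged into one kernel-verified Lean document; each statement's English description precedes it below -/
import Mathlib

section
/- Let μ, σ > 0, δ ∈ {0,1}, s ≠ 0, and let X be the random variable X = (1-B)·Z₁^(-1/s) + B·Z₂^(-1/s), where B ~ Bernoulli(δ/(σ+δ)) is independent of Z₁ ~ Gamma(μ, 1/(μσ)) and Z₂ ~ Gamma(μ+1, 1/(μσ)). Then for any real q with μ - q/s > 0, E[X^q] = (μσ)^(q/s) · (Γ(μ - q/s)/Γ(μ)) · [σ/(σ+δ) + (δ/(σ+δ)) · (μ - q/s)/μ]. -/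
open Real MeasureTheory ProbabilityTheory

open Set in
lemma gamma_moment {a r t : ℝ} (ha : 0 < a) (hr : 0 < r) (hat : 0 < a + t) :
    Integrable (fun x => x ^ t) (gammaMeasure a r) ∧
    ∫ x, x ^ t ∂(gammaMeasure a r) = r ^ (-t) * (Gamma (a + t) / Gamma a) := by
  have hf_meas : Measurable fun x => (gammaPDFReal a r x).toNNReal :=
    (measurable_gammaPDFReal a r).real_toNNReal
  have hgm : gammaMeasure a r
      = volume.withDensity (fun x => ((gammaPDFReal a r x).toNNReal : ENNReal)) := rfl
  have h_ae : (fun x => (gammaPDFReal a r x).toNNReal • x ^ t) =ᵐ[volume]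
      (Ioi (0:ℝ)).indicator (fun x => r ^ a / Gamma a * (x ^ (a + t - 1) * Real.exp (-r * x))) := by
    have h0 : ∀ᵐ x : ℝ, x ≠ 0 := by
      refine ae_iff.2 ?_
      simp
    filter_upwards [h0] with x hx
    rcases hx.lt_or_gt with hneg | hpos
    · rw [indicator_of_notMem (by simp [hneg.not_gt])]
      rw [NNReal.smul_def]
      simp [gammaPDFReal, hneg.not_ge]
    · rw [indicator_of_mem (mem_Ioi.mpr hpos)]
      rw [NNReal.smul_def, smul_eq_mul, Real.coe_toNNReal _ (gammaPDFReal_nonneg ha hr x)]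
      have hx1 : x ^ (a + t - 1) = x ^ (a - 1) * x ^ t := by
        rw [← Real.rpow_add hpos]; ring_nf
      simp only [gammaPDFReal, if_pos hpos.le, hx1]
      ring_nf
  have h_int_on : IntegrableOn
      (fun x => r ^ a / Gamma a * (x ^ (a + t - 1) * Real.exp (-r * x))) (Ioi (0:ℝ)) := by
    have := (integrableOn_rpow_mul_exp_neg_mul_rpow (p := 1) (s := a + t - 1) (b := r)
      (by linarith) zero_lt_one hr).const_mul (r ^ a / Gamma a)
    simpa [Real.rpow_one, IntegrableOn] using this
  have h_int_ind : Integrable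
      ((Ioi (0:ℝ)).indicator (fun x => r ^ a / Gamma a * (x ^ (a + t - 1) * Real.exp (-r * x)))) :=
    h_int_on.integrable_indicator measurableSet_Ioi
  have h_int_smul : Integrable (fun x => (gammaPDFReal a r x).toNNReal • x ^ t) :=
    h_int_ind.congr h_ae.symm
  constructor
  · rw [hgm]
    exact (integrable_withDensity_iff_integrable_smul hf_meas).mpr h_int_smul
  · rw [hgm, integral_withDensity_eq_integral_smul hf_meas, integral_congr_ae h_ae,
      integral_indicator measurableSet_Ioi, integral_const_mul]
    have hval : ∫ x in Ioi (0:ℝ), x ^ (a + t - 1) * Real.exp (-r * x)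
        = r ^ (-(a + t)) * Gamma (a + t) := by
      have := integral_rpow_mul_exp_neg_mul_rpow (p := 1) (q := a + t - 1) (b := r)
        (by norm_num) (by linarith) hr
      simpa [Real.rpow_one, sub_add_cancel] using this
    rw [hval]
    have hra : r ^ a * r ^ (-(a + t)) = r ^ (-t) := by
      rw [← Real.rpow_add hr]; ring_nf
    field_simp
    rw [← hra]

/-- Let `X = (1-B)·Z₁^(-1/s) + B·Z₂^(-1/s)` with `B ~ Bernoulli(δ/(σ+δ))` independent of
`Z₁ ~ Gamma(μ, 1/(μσ))` and `Z₂ ~ Gamma(μ+1, 1/(μσ))`.  Then for real `q` with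
`μ - q/s > 0`,
`E[X^q] = (μσ)^(q/s) · (Γ(μ-q/s)/Γ(μ)) · [σ/(σ+δ) + (δ/(σ+δ))·(μ-q/s)/μ]`. -/
theorem weighted_family_moment {Ω : Type*} [MeasurableSpace Ω]
    (P : Measure Ω) [IsProbabilityMeasure P]
    (μ σ δ s q : ℝ) (hμ : 0 < μ) (hσ : 0 < σ) (hδ : δ = 0 ∨ δ = 1) (hs : s ≠ 0)
    (B Z₁ Z₂ : Ω → ℝ)
    (hB : Measurable B) (hZ₁m : Measurable Z₁) (hZ₂m : Measurable Z₂)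
    (hB01 : ∀ ω, B ω = 0 ∨ B ω = 1)
    (hBp : (P {ω | B ω = 1}).toReal = δ / (σ + δ))
    (hindep : IndepFun B (fun ω => (Z₁ ω, Z₂ ω)) P)
    (hZ₁ : Measure.map Z₁ P = gammaMeasure μ (μ * σ))
    (hZ₂ : Measure.map Z₂ P = gammaMeasure (μ + 1) (μ * σ))
    (X : Ω → ℝ)
    (hX : ∀ ω, X ω = (1 - B ω) * Z₁ ω ^ (-1 / s) + B ω * Z₂ ω ^ (-1 / s))
    (hq : 0 < μ - q / s) :
    ∫ ω, X ω ^ q ∂P =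
      (μ * σ) ^ (q / s) * (Real.Gamma (μ - q / s) / Real.Gamma μ) *
        (σ / (σ + δ) + δ / (σ + δ) * ((μ - q / s) / μ)) := by
  have hσδ : 0 < σ + δ := by rcases hδ with h | h <;> rw [h] <;> linarith
  have hr : 0 < μ * σ := mul_pos hμ hσ
  -- a.e. positivity of Z₁, Z₂
  have hposZ : ∀ (Z : Ω → ℝ) (a : ℝ), Measurable Z →
      Measure.map Z P = gammaMeasure a (μ * σ) → ∀ᵐ ω ∂P, 0 < Z ω := by
    intro Z a hZm hmap
    have h0 : P (Z ⁻¹' (Set.Iic 0)) = 0 := by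
      rw [← Measure.map_apply hZm measurableSet_Iic, hmap]
      show (volume.withDensity (gammaPDF a (μ * σ))) (Set.Iic 0) = 0
      rw [withDensity_apply _ measurableSet_Iic,
        setLIntegral_congr (Iio_ae_eq_Iic (a := (0:ℝ))).symm]
      exact lintegral_gammaPDF_of_nonpos le_rfl
    refine ae_iff.2 ?_
    convert h0 using 2
    ext ω
    simp [not_lt]
  have hZ₁pos := hposZ Z₁ μ hZ₁m hZ₁
  have hZ₂pos := hposZ Z₂ (μ + 1) hZ₂m hZ₂
  -- a.e. rewriting of X^q
  have hXq : (fun ω => X ω ^ q) =ᵐ[P]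
      fun ω => (1 - B ω) * Z₁ ω ^ (-(q / s)) + B ω * Z₂ ω ^ (-(q / s)) := by
    filter_upwards [hZ₁pos, hZ₂pos] with ω h1 h2
    rcases hB01 ω with hb | hb
    · rw [hX ω, hb]
      simp only [sub_zero, one_mul, zero_mul, add_zero]
      rw [← Real.rpow_mul h1.le]
      congr 1
      ring
    · rw [hX ω, hb]
      simp only [sub_self, zero_mul, one_mul, zero_add]
      rw [← Real.rpow_mul h2.le]
      congr 1
      ring
  -- moments of Z₁, Z₂
  have hkey : ∀ (Z : Ω → ℝ) (a : ℝ), Measurable Z →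
      Measure.map Z P = gammaMeasure a (μ * σ) → 0 < a → 0 < a - q / s →
      Integrable (fun ω => Z ω ^ (-(q / s))) P ∧
        ∫ ω, Z ω ^ (-(q / s)) ∂P =
          (μ * σ) ^ (q / s) * (Real.Gamma (a - q / s) / Real.Gamma a) := by
    intro Z a hZm hmap ha hat
    have hat' : 0 < a + -(q / s) := by linarith
    obtain ⟨hint, hval⟩ := gamma_moment (t := -(q / s)) ha hr hat'
    have hfm : Measurable fun x : ℝ => x ^ (-(q / s)) :=
      measurable_id.pow_const _ |>.mono le_rfl le_rfl |>.mono le_rfl le_rfl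
    constructor
    · rw [← hmap] at hint
      exact (integrable_map_measure hint.aestronglyMeasurable hZm.aemeasurable).mp hint
    · have := integral_map (φ := Z) (f := fun x : ℝ => x ^ (-(q / s)))
        hZm.aemeasurable (by rw [hmap]; exact hint.aestronglyMeasurable)
      rw [hmap, hval] at this
      rw [← this]
      rw [neg_neg, show a + -(q / s) = a - q / s by ring]
  obtain ⟨hintZ₁, hvalZ₁⟩ := hkey Z₁ μ hZ₁m hZ₁ hμ hq
  obtain ⟨hintZ₂, hvalZ₂⟩ := hkey Z₂ (μ + 1) hZ₂m hZ₂ (by linarith) (by linarith)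
  -- expectations of B and 1 - B
  have hBset : MeasurableSet {ω | B ω = 1} := hB (measurableSet_singleton 1)
  have hBind : B = Set.indicator {ω | B ω = 1} (1 : Ω → ℝ) := by
    funext ω
    rcases hB01 ω with h | h <;> simp [Set.indicator_apply, h]
  have hintB : Integrable B P := by
    rw [hBind]; exact (integrable_const 1).indicator hBset
  have hEB : ∫ ω, B ω ∂P = δ / (σ + δ) := by
    rw [show (fun ω => B ω) = B from rfl, hBind, integral_indicator_one hBset]; exact hBp
  have hint1B : Integrable (fun ω => 1 - B ω) P := (integrable_const 1).sub hintB
  have hE1B : ∫ ω, (1 - B ω) ∂P = σ / (σ + δ) := by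
    rw [integral_sub (integrable_const 1) hintB, integral_const, hEB]
    simp only [measure_univ, probReal_univ, ENNReal.toReal_one, smul_eq_mul, mul_one, one_mul]
    field_simp
    ring
  -- independence
  have hmfst : Measurable fun p : ℝ × ℝ => p.1 ^ (-(q / s)) :=
    measurable_fst.pow_const _
  have hmsnd : Measurable fun p : ℝ × ℝ => p.2 ^ (-(q / s)) :=
    measurable_snd.pow_const _
  have hi₁ : IndepFun (fun ω => 1 - B ω) (fun ω => Z₁ ω ^ (-(q / s))) P :=
    hindep.comp (measurable_const.sub measurable_id) hmfst
  have hi₂ : IndepFun B (fun ω => Z₂ ω ^ (-(q / s))) P :=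
    hindep.comp measurable_id hmsnd
  -- integrability of products
  have hintP₁ : Integrable (fun ω => (1 - B ω) * Z₁ ω ^ (-(q / s))) P := by
    refine hintZ₁.bdd_mul (c := 1) ?_ (ae_of_all _ fun ω => ?_)
    · exact (measurable_const.sub hB).aestronglyMeasurable
    · rcases hB01 ω with h | h <;> simp [h]
  have hintP₂ : Integrable (fun ω => B ω * Z₂ ω ^ (-(q / s))) P := by
    refine hintZ₂.bdd_mul (c := 1) hB.aestronglyMeasurable (ae_of_all _ fun ω => ?_)
    rcases hB01 ω with h | h <;> simp [h]
  have hmul₁ := hi₁.integral_mul_eq_mul_integral hint1B.aestronglyMeasurable hintZ₁.aestronglyMeasurable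
  have hmul₂ := hi₂.integral_mul_eq_mul_integral hintB.aestronglyMeasurable hintZ₂.aestronglyMeasurable
  rw [show ((fun ω => 1 - B ω) * fun ω => Z₁ ω ^ (-(q / s)))
      = fun ω => (1 - B ω) * Z₁ ω ^ (-(q / s)) from rfl] at hmul₁
  rw [show (B * fun ω => Z₂ ω ^ (-(q / s)))
      = fun ω => B ω * Z₂ ω ^ (-(q / s)) from rfl] at hmul₂
  rw [integral_congr_ae hXq, integral_add hintP₁ hintP₂, hmul₁, hmul₂,
    hEB, hE1B, hvalZ₁, hvalZ₂]
  have hΓ2 : Real.Gamma (μ + 1 - q / s) = (μ - q / s) * Real.Gamma (μ - q / s) := by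
    rw [show μ + 1 - q / s = (μ - q / s) + 1 by ring, Real.Gamma_add_one hq.ne']
  have hΓ3 : Real.Gamma (μ + 1) = μ * Real.Gamma μ := Real.Gamma_add_one hμ.ne'
  rw [hΓ2, hΓ3]
  have hΓμ : Real.Gamma μ ≠ 0 := (Real.Gamma_pos_of_pos hμ).ne'
  field_simp
end

section
/- Let μ, σ > 0, δ ∈ {0,1}, s ≠ 0, and let X = (1-B)·Z₁^(-1/s) + B·Z₂^(-1/s) with B ~ Bernoulli(δ/(σ+δ)) independent of Z₁ ~ Gamma(μ, 1/(μσ)) and Z₂ ~ Gamma(μ+1, 1/(μσ)). Then E[log X] = -(1/s)·[ψ(μ+1) - log(μσ) - (1/μ)·σ/(σ+δ)], where ψ is the digamma function. -/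
open Real MeasureTheory ProbabilityTheory

/-- The digamma function `ψ = Γ'/Γ`. -/
noncomputable def digamma (x : ℝ) : ℝ := deriv Real.Gamma x / Real.Gamma x

open Set Filter Asymptotics
open scoped ENNReal NNReal

lemma cintegrable (a : ℝ) (ha : 0 < a) :
    IntegrableOn (fun t : ℝ => (t:ℂ) ^ ((a:ℂ) - 1) • (Real.log t • (Real.exp (-t) : ℂ))) (Ioi 0) := by
  have h := (mellin_hasDerivAt_of_isBigO_rpow (E := ℂ) (a := a+1) (b := 0)
    (f := fun x => (Real.exp (-x) : ℂ)) (s := a) ?_ ?_ ?_ ?_ ?_).1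
  · exact h
  · refine (Continuous.continuousOn ?_).locallyIntegrableOn measurableSet_Ioi
    exact Complex.continuous_ofReal.comp (Real.continuous_exp.comp continuous_neg)
  · rw [← isBigO_norm_left]
    simp_rw [Complex.norm_real, isBigO_norm_left]
    simpa only [neg_one_mul] using (isLittleO_exp_neg_mul_rpow_atTop zero_lt_one _).isBigO
  · simpa using ha.trans (lt_add_one a)
  · simp_rw [neg_zero, Real.rpow_zero]
    refine Asymptotics.isBigO_const_of_tendsto (?_ : Tendsto _ _ (nhds (1 : ℂ))) one_ne_zero
    rw [(by simp : (1 : ℂ) = Real.exp (-0))]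
    exact (Complex.continuous_ofReal.comp (Real.continuous_exp.comp continuous_neg)).continuousWithinAt
  · simpa using ha

lemma cpt {a t : ℝ} (ht : t ∈ Ioi (0:ℝ)) :
    (t:ℂ) ^ ((a:ℂ) - 1) • (Real.log t • (Real.exp (-t) : ℂ))
      = ((t ^ (a - 1) * (Real.log t * Real.exp (-t)) : ℝ) : ℂ) := by
  rw [mem_Ioi] at ht
  rw [← Complex.ofReal_one, ← Complex.ofReal_sub, ← Complex.ofReal_cpow ht.le]
  simp only [smul_eq_mul, Complex.real_smul]
  push_cast
  ring

lemma rintegrable (a : ℝ) (ha : 0 < a) :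
    IntegrableOn (fun t : ℝ => t ^ (a - 1) * (Real.log t * Real.exp (-t))) (Ioi 0) := by
  have h := ((cintegrable a ha).congr_fun (fun t ht => cpt ht) measurableSet_Ioi).re
  refine (integrable_congr ?_).mp h
  filter_upwards with t
  simp only [RCLike.re_to_complex, Complex.ofReal_re]

lemma hasDerivAt_RGamma (a : ℝ) (ha : 0 < a) :
    HasDerivAt Real.Gamma (∫ t in Ioi 0, t ^ (a - 1) * (Real.log t * Real.exp (-t))) a := by
  have h1 := Complex.hasDerivAt_GammaIntegral (s := (a:ℂ)) (by simpa using ha)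
  have heq : ∫ t : ℝ in Ioi 0, (t:ℂ) ^ ((a:ℂ) - 1) * (Real.log t * Real.exp (-t))
      = ((∫ t in Ioi 0, t ^ (a - 1) * (Real.log t * Real.exp (-t)) : ℝ) : ℂ) := by
    rw [show ((∫ t in Ioi 0, t ^ (a - 1) * (Real.log t * Real.exp (-t)) : ℝ) : ℂ) = ∫ t in Ioi (0:ℝ), ((t ^ (a - 1) * (Real.log t * Real.exp (-t)) : ℝ) : ℂ) from (integral_ofReal (𝕜 := ℂ)).symm]
    refine setIntegral_congr_fun measurableSet_Ioi (fun t ht => ?_)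
    have := cpt (a := a) ht
    simpa [smul_eq_mul] using this
  rw [heq] at h1
  have h2 : HasDerivAt Complex.Gamma ((∫ t in Ioi 0, t ^ (a - 1) * (Real.log t * Real.exp (-t)) : ℝ) : ℂ) (a:ℂ) := by
    refine h1.congr_of_eventuallyEq ?_
    filter_upwards [Complex.continuous_re.isOpen_preimage _ isOpen_Ioi |>.mem_nhds (by simpa using ha)] with z hz
    exact (Complex.Gamma_eq_integral hz)
  simpa [Complex.Gamma_ofReal] using h2.real_of_complex

lemma hI1 {a r : ℝ} (ha : 0 < a) (hr : 0 < r) :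
    IntegrableOn (fun x : ℝ => x ^ (a - 1) * Real.exp (-(r * x))) (Ioi 0) := by
  have h0 : IntegrableOn (fun x : ℝ => Real.exp (-(r * x)) * (r * x) ^ (a - 1)) (Ioi 0) := by
    have := (integrableOn_Ioi_comp_mul_left_iff
      (fun x : ℝ => Real.exp (-x) * x ^ (a - 1)) 0 hr).mpr
      (by simpa [mul_zero] using Real.GammaIntegral_convergent ha)
    simpa [mul_zero] using this
  refine IntegrableOn.congr_fun (h0.const_mul (r ^ (-(a - 1)))) (fun x hx => ?_) measurableSet_Ioi
  rw [mem_Ioi] at hx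
  rw [Real.mul_rpow hr.le hx.le]
  rw [show r ^ (-(a-1)) * (Real.exp (-(r*x)) * (r ^ (a-1) * x ^ (a-1)))
    = (r ^ (-(a-1)) * r ^ (a-1)) * (x ^ (a-1) * Real.exp (-(r*x))) by ring,
    ← Real.rpow_add hr, neg_add_cancel, Real.rpow_zero, one_mul]

lemma hJint {a r : ℝ} (ha : 0 < a) (hr : 0 < r) :
    IntegrableOn (fun x : ℝ => Real.log x * (x ^ (a - 1) * Real.exp (-(r * x)))) (Ioi 0) := by
  have hfull : IntegrableOn
      (fun x : ℝ => (r * x) ^ (a - 1) * (Real.log (r * x) * Real.exp (-(r * x)))) (Ioi 0) := by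
    have := (integrableOn_Ioi_comp_mul_left_iff
      (fun t : ℝ => t ^ (a - 1) * (Real.log t * Real.exp (-t))) 0 hr).mpr
      (by simpa [mul_zero] using rintegrable a ha)
    simpa [mul_zero] using this
  refine IntegrableOn.congr_fun ((hfull.const_mul (r ^ (-(a - 1)))).sub
    ((hI1 ha hr).const_mul (Real.log r))) (fun x hx => ?_) measurableSet_Ioi
  rw [mem_Ioi] at hx
  simp only [Pi.sub_apply]
  rw [Real.mul_rpow hr.le hx.le, Real.log_mul hr.ne' hx.ne']
  rw [show r ^ (-(a-1)) * (r ^ (a-1) * x ^ (a-1) * ((Real.log r + Real.log x) * Real.exp (-(r*x))))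
    = (r ^ (-(a-1)) * r ^ (a-1)) * (x ^ (a-1) * ((Real.log r + Real.log x) * Real.exp (-(r*x)))) by ring,
    ← Real.rpow_add hr, neg_add_cancel, Real.rpow_zero, one_mul]
  ring

lemma Jval {a r : ℝ} (ha : 0 < a) (hr : 0 < r) :
    ∫ x in Ioi 0, Real.log x * (x ^ (a - 1) * Real.exp (-(r * x)))
      = (r ^ a)⁻¹ * (deriv Real.Gamma a - Real.log r * Real.Gamma a) := by
  have hD : deriv Real.Gamma a = ∫ t in Ioi 0, t ^ (a - 1) * (Real.log t * Real.exp (-t)) :=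
    (hasDerivAt_RGamma a ha).deriv
  have key := integral_comp_mul_left_Ioi
    (fun t : ℝ => t ^ (a - 1) * (Real.log t * Real.exp (-t))) 0 hr
  rw [mul_zero, ← hD, smul_eq_mul] at key
  have hsplit : ∫ x in Ioi 0, (r * x) ^ (a - 1) * (Real.log (r * x) * Real.exp (-(r * x)))
      = (r ^ (a - 1) * Real.log r) * ((1 / r) ^ a * Real.Gamma a)
        + r ^ (a - 1) * ∫ x in Ioi 0, Real.log x * (x ^ (a - 1) * Real.exp (-(r * x))) := by
    rw [← Real.integral_rpow_mul_exp_neg_mul_Ioi ha hr, ← integral_const_mul, ← integral_const_mul,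
      ← integral_add (((hI1 ha hr).const_mul _)) ((hJint ha hr).const_mul _)]
    refine setIntegral_congr_fun measurableSet_Ioi (fun x hx => ?_)
    rw [mem_Ioi] at hx
    rw [Real.mul_rpow hr.le hx.le, Real.log_mul hr.ne' hx.ne']
    ring
  rw [hsplit] at key
  have hw : (0:ℝ) < r ^ a := Real.rpow_pos_of_pos hr a
  have h1 : r ^ (a - 1) = r ^ a / r := by
    rw [Real.rpow_sub hr, Real.rpow_one]
  have h2 : (1 / r) ^ a = (r ^ a)⁻¹ := by
    rw [one_div, Real.inv_rpow hr.le]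
  rw [h1, h2] at key
  set J := ∫ x in Ioi 0, Real.log x * (x ^ (a - 1) * Real.exp (-(r * x))) with hJdef
  have keyJ : (r ^ a / r) * J
      = r⁻¹ * deriv Real.Gamma a - (r ^ a / r * Real.log r) * ((r ^ a)⁻¹ * Real.Gamma a) := by
    linarith [key]
  have : J = (r / r ^ a) * ((r ^ a / r) * J) := by
    field_simp
  rw [this, keyJ]
  field_simp

open ProbabilityTheory

lemma F_eq_indicator {a r : ℝ} :
    (fun x => Real.log x * gammaPDFReal a r x)
      = Set.indicator (Ioi 0) (fun x => Real.log x * gammaPDFReal a r x) := by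
  ext x
  rcases lt_trichotomy x 0 with h | h | h
  · rw [indicator_of_notMem (by simp [not_lt.mpr h.le])]
    simp [gammaPDFReal, not_le.mpr h]
  · subst h
    rw [indicator_of_notMem (by simp)]
    simp
  · rw [indicator_of_mem (mem_Ioi.mpr h)]

lemma F_intOn {a r : ℝ} (ha : 0 < a) (hr : 0 < r) :
    IntegrableOn (fun x => Real.log x * gammaPDFReal a r x) (Ioi 0) := by
  refine IntegrableOn.congr_fun ((hJint ha hr).const_mul (r ^ a / Real.Gamma a))
    (fun x hx => ?_) measurableSet_Ioi
  rw [mem_Ioi] at hx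
  rw [gammaPDFReal, if_pos hx.le]
  ring

lemma gamma_log_integrable {a r : ℝ} (ha : 0 < a) (hr : 0 < r) :
    Integrable Real.log (gammaMeasure a r) := by
  have hpdf : gammaPDF a r = fun x => ENNReal.ofReal (gammaPDFReal a r x) := funext fun x => rfl
  rw [gammaMeasure, hpdf, integrable_withDensity_iff ((measurable_gammaPDFReal a r).ennreal_ofReal)
    (Eventually.of_forall fun x => ENNReal.ofReal_lt_top)]
  have : (fun x => Real.log x * (ENNReal.ofReal (gammaPDFReal a r x)).toReal)
      = fun x => Real.log x * gammaPDFReal a r x := by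
    ext x
    rw [ENNReal.toReal_ofReal (gammaPDFReal_nonneg ha hr x)]
  rw [this, F_eq_indicator]
  exact (F_intOn ha hr).integrable_indicator measurableSet_Ioi

lemma gamma_log_moment {a r : ℝ} (ha : 0 < a) (hr : 0 < r) :
    ∫ x, Real.log x ∂(gammaMeasure a r)
      = deriv Real.Gamma a / Real.Gamma a - Real.log r := by
  have hmeas : gammaMeasure a r
      = volume.withDensity (fun x => ((gammaPDFReal a r x).toNNReal : ℝ≥0∞)) := rfl
  rw [hmeas, integral_withDensity_eq_integral_smul (measurable_gammaPDFReal a r).real_toNNReal]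
  have : (fun x => (gammaPDFReal a r x).toNNReal • Real.log x)
      = fun x => Real.log x * gammaPDFReal a r x := by
    ext x
    rw [NNReal.smul_def, smul_eq_mul, Real.coe_toNNReal _ (gammaPDFReal_nonneg ha hr x)]
    ring
  rw [this, ← setIntegral_eq_integral_of_forall_compl_eq_zero (s := Ioi 0) (fun x hx => ?_)]
  · have : ∫ x in Ioi 0, Real.log x * gammaPDFReal a r x
        = (r ^ a / Real.Gamma a) * ∫ x in Ioi 0, Real.log x * (x ^ (a-1) * Real.exp (-(r*x))) := by
      rw [← integral_const_mul]
      refine setIntegral_congr_fun measurableSet_Ioi (fun x hx => ?_)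
      rw [mem_Ioi] at hx
      rw [gammaPDFReal, if_pos hx.le]
      ring
    rw [this, Jval ha hr]
    have hG : Real.Gamma a ≠ 0 := (Real.Gamma_pos_of_pos ha).ne'
    have hw : (r : ℝ) ^ a ≠ 0 := (Real.rpow_pos_of_pos hr a).ne'
    field_simp
  · rw [mem_Ioi, not_lt] at hx
    rcases lt_or_eq_of_le hx with h | h
    · simp [gammaPDFReal, not_le.mpr h]
    · simp [h]


lemma Gamma_ne_neg_nat {μ : ℝ} (hμ : 0 < μ) : ∀ m : ℕ, μ ≠ -m := by
  intro m h
  have : (0:ℝ) ≤ (m:ℝ) := Nat.cast_nonneg m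
  linarith [h ▸ hμ]

lemma deriv_Gamma_add_one {μ : ℝ} (hμ : 0 < μ) :
    deriv Real.Gamma (μ + 1) = Real.Gamma μ + μ * deriv Real.Gamma μ := by
  have hd : HasDerivAt Real.Gamma (deriv Real.Gamma μ) μ :=
    (Real.differentiableAt_Gamma (Gamma_ne_neg_nat hμ)).hasDerivAt
  have hd1 : HasDerivAt Real.Gamma (deriv Real.Gamma (μ + 1)) (μ + 1) :=
    (Real.differentiableAt_Gamma (Gamma_ne_neg_nat (by linarith))).hasDerivAt
  have h2 : HasDerivAt (fun x => Real.Gamma (x + 1)) (deriv Real.Gamma (μ + 1) * 1) μ :=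
    by have := hd1.comp μ ((hasDerivAt_id' μ).add_const 1); exact this
  have h3 : HasDerivAt (fun x => x * Real.Gamma x) (1 * Real.Gamma μ + μ * deriv Real.Gamma μ) μ :=
    (hasDerivAt_id μ).mul hd
  have h4 : HasDerivAt (fun x => Real.Gamma (x + 1)) (1 * Real.Gamma μ + μ * deriv Real.Gamma μ) μ := by
    refine h3.congr_of_eventuallyEq ?_
    filter_upwards [Ioi_mem_nhds hμ] with x hx
    rw [Real.Gamma_add_one (ne_of_gt hx)]
  have := h2.unique h4
  linarith [this]

lemma digamma_rec {μ : ℝ} (hμ : 0 < μ) :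
    digamma μ = digamma (μ + 1) - 1 / μ := by
  have hG : Real.Gamma μ ≠ 0 := (Real.Gamma_pos_of_pos hμ).ne'
  have hG1 : Real.Gamma (μ + 1) = μ * Real.Gamma μ := Real.Gamma_add_one hμ.ne'
  rw [digamma, digamma, deriv_Gamma_add_one hμ, hG1]
  field_simp
  ring

lemma gamma_ae_pos {a r : ℝ} : ∀ᵐ x ∂(gammaMeasure a r), 0 < x := by
  rw [ae_iff]
  have hset : {x : ℝ | ¬ 0 < x} = Iic 0 := by ext x; simp
  rw [hset]
  rw [show gammaMeasure a r = volume.withDensity (gammaPDF a r) from rfl,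
    withDensity_apply _ measurableSet_Iic]
  have h0 : ∀ᵐ x : ℝ, x ≠ 0 := by
    have : (volume : Measure ℝ) {(0:ℝ)} = 0 := measure_singleton 0
    rw [ae_iff]
    simpa [Classical.not_not] using this
  have : ∀ᵐ x ∂(volume.restrict (Iic (0:ℝ))), gammaPDF a r x = 0 := by
    filter_upwards [ae_restrict_mem measurableSet_Iic, ae_restrict_of_ae h0] with x hx hx0
    exact gammaPDF_of_neg (lt_of_le_of_ne hx hx0)
  rw [lintegral_congr_ae this, lintegral_zero]

/-- With `X` from the weighted exponential family (mixture representation with generator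
`T(x) = x^(-s)`), `E[log X] = -(1/s)·[ψ(μ+1) - log(μσ) - (1/μ)·σ/(σ+δ)]`. -/
theorem weighted_family_log_moment {Ω : Type*} [MeasurableSpace Ω]
    (P : Measure Ω) [IsProbabilityMeasure P]
    (μ σ δ s : ℝ) (hμ : 0 < μ) (hσ : 0 < σ) (hδ : δ = 0 ∨ δ = 1) (hs : s ≠ 0)
    (B Z₁ Z₂ : Ω → ℝ)
    (hB : Measurable B) (hZ₁m : Measurable Z₁) (hZ₂m : Measurable Z₂)
    (hB01 : ∀ ω, B ω = 0 ∨ B ω = 1)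
    (hBp : (P {ω | B ω = 1}).toReal = δ / (σ + δ))
    (hindep : IndepFun B (fun ω => (Z₁ ω, Z₂ ω)) P)
    (hZ₁ : Measure.map Z₁ P = gammaMeasure μ (μ * σ))
    (hZ₂ : Measure.map Z₂ P = gammaMeasure (μ + 1) (μ * σ))
    (X : Ω → ℝ)
    (hX : ∀ ω, X ω = (1 - B ω) * Z₁ ω ^ (-1 / s) + B ω * Z₂ ω ^ (-1 / s)) :
    ∫ ω, Real.log (X ω) ∂P =
      -(1 / s) * (digamma (μ + 1) - Real.log (μ * σ) - 1 / μ * (σ / (σ + δ))) := by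
  have hr : 0 < μ * σ := mul_pos hμ hσ
  have hμ1 : 0 < μ + 1 := by linarith
  -- a.e. positivity
  have hZ₁pos : ∀ᵐ ω ∂P, 0 < Z₁ ω := by
    have h := gamma_ae_pos (a := μ) (r := μ * σ)
    rw [← hZ₁] at h
    exact (ae_map_iff hZ₁m.aemeasurable measurableSet_Ioi).mp h
  have hZ₂pos : ∀ᵐ ω ∂P, 0 < Z₂ ω := by
    have h := gamma_ae_pos (a := μ + 1) (r := μ * σ)
    rw [← hZ₂] at h
    exact (ae_map_iff hZ₂m.aemeasurable measurableSet_Ioi).mp h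
  -- a.e. identity for log X
  have hlog : ∀ᵐ ω ∂P, Real.log (X ω)
      = (1 - B ω) * ((-1/s) * Real.log (Z₁ ω)) + B ω * ((-1/s) * Real.log (Z₂ ω)) := by
    filter_upwards [hZ₁pos, hZ₂pos] with ω h1 h2
    rcases hB01 ω with h | h <;> rw [hX ω, h]
    · simp only [sub_zero, zero_mul, one_mul, add_zero, mul_zero, zero_add]
      rw [Real.log_rpow h1]
    · simp only [sub_self, zero_mul, one_mul, zero_add, mul_zero]
      rw [Real.log_rpow h2]
  -- integrability of logs
  have hint1 : Integrable (fun ω => Real.log (Z₁ ω)) P := by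
    have h : Integrable Real.log (Measure.map Z₁ P) := by
      rw [hZ₁]; exact gamma_log_integrable hμ hr
    exact (integrable_map_measure Real.measurable_log.aestronglyMeasurable
      hZ₁m.aemeasurable).mp h
  have hint2 : Integrable (fun ω => Real.log (Z₂ ω)) P := by
    have h : Integrable Real.log (Measure.map Z₂ P) := by
      rw [hZ₂]; exact gamma_log_integrable hμ1 hr
    exact (integrable_map_measure Real.measurable_log.aestronglyMeasurable
      hZ₂m.aemeasurable).mp h
  -- expectations of logs
  have hE1 : ∫ ω, Real.log (Z₁ ω) ∂P = digamma μ - Real.log (μ * σ) := by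
    rw [← integral_map hZ₁m.aemeasurable Real.measurable_log.aestronglyMeasurable, hZ₁,
      gamma_log_moment hμ hr]
    rfl
  have hE2 : ∫ ω, Real.log (Z₂ ω) ∂P = digamma (μ + 1) - Real.log (μ * σ) := by
    rw [← integral_map hZ₂m.aemeasurable Real.measurable_log.aestronglyMeasurable, hZ₂,
      gamma_log_moment hμ1 hr]
    rfl
  -- B facts
  have hBmeas1 : MeasurableSet {ω | B ω = 1} := hB (measurableSet_singleton 1)
  have hBfun : B = Set.indicator {ω | B ω = 1} (fun _ => (1:ℝ)) := by
    funext ω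
    rcases hB01 ω with h | h
    · rw [h, indicator_of_notMem (by simp [h])]
    · rw [h, indicator_of_mem (by simp [h])]
  have hBint : Integrable B P := by
    rw [hBfun]; exact (integrable_const (1:ℝ)).indicator hBmeas1
  have hBE : ∫ ω, B ω ∂P = δ / (σ + δ) := by
    rw [show (fun ω => B ω) = B from rfl, hBfun, integral_indicator_const _ hBmeas1, Measure.real, hBp]
    simp
  have h1BE : ∫ ω, (1 - B ω) ∂P = 1 - δ / (σ + δ) := by
    rw [integral_sub (integrable_const 1) hBint, hBE, integral_const]
    simp
  have h1Bint : Integrable (fun ω => 1 - B ω) P := (integrable_const 1).sub hBint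
  -- independence
  have hi1 : ProbabilityTheory.IndepFun B Z₁ P := hindep.comp measurable_id measurable_fst
  have hi2 : ProbabilityTheory.IndepFun B Z₂ P := hindep.comp measurable_id measurable_snd
  have hg1 : ProbabilityTheory.IndepFun (fun ω => 1 - B ω)
      (fun ω => (-1/s) * Real.log (Z₁ ω)) P :=
    hi1.comp (measurable_const.sub measurable_id) (Real.measurable_log.const_mul _)
  have hg2 : ProbabilityTheory.IndepFun B (fun ω => (-1/s) * Real.log (Z₂ ω)) P :=
    hi2.comp measurable_id (Real.measurable_log.const_mul _)
  have hL1int : Integrable (fun ω => (-1/s) * Real.log (Z₁ ω)) P := hint1.const_mul _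
  have hL2int : Integrable (fun ω => (-1/s) * Real.log (Z₂ ω)) P := hint2.const_mul _
  have hprod1 : Integrable (fun ω => (1 - B ω) * ((-1/s) * Real.log (Z₁ ω))) P :=
    hg1.integrable_mul h1Bint hL1int
  have hprod2 : Integrable (fun ω => B ω * ((-1/s) * Real.log (Z₂ ω))) P :=
    hg2.integrable_mul hBint hL2int
  -- put together
  have hm1 : ∫ a, (1 - B a) * (-1/s * Real.log (Z₁ a)) ∂P
      = (∫ a, (1 - B a) ∂P) * ∫ a, (-1/s * Real.log (Z₁ a)) ∂P := by
    simpa [Pi.mul_apply] using hg1.integral_mul_eq_mul_integral h1Bint.aestronglyMeasurable hL1int.aestronglyMeasurable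
  have hm2 : ∫ a, B a * (-1/s * Real.log (Z₂ a)) ∂P
      = (∫ a, B a ∂P) * ∫ a, (-1/s * Real.log (Z₂ a)) ∂P := by
    simpa [Pi.mul_apply] using hg2.integral_mul_eq_mul_integral hBint.aestronglyMeasurable hL2int.aestronglyMeasurable
  rw [integral_congr_ae hlog, integral_add hprod1 hprod2, hm1, hm2,
    integral_const_mul, integral_const_mul, hE1, hE2, h1BE, hBE]
  -- final algebra
  have hrec := digamma_rec hμ
  have hfrac : 1 - δ / (σ + δ) = σ / (σ + δ) := by
    rcases hδ with h | h <;> subst h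
    · rw [add_zero, zero_div, sub_zero, div_self hσ.ne']
    · field_simp
      ring
  have hσδ : (0:ℝ) < σ + δ := by rcases hδ with h | h <;> subst h <;> linarith
  rw [hrec, hfrac]
  field_simp
  ring
end

section
/- Let μ, σ > 0, δ ∈ {0,1}, s ≠ 0, and let X = (1-B)·Z₁^(-1/s) + B·Z₂^(-1/s) with B ~ Bernoulli(δ/(σ+δ)) independent of Z₁ ~ Gamma(μ, 1/(μσ)) and Z₂ ~ Gamma(μ+1, 1/(μσ)). Then for any real p with μ + p/s > 0, E[X^(-p) log X] = -(1/s)·(Γ(μ+p/s)/((μσ)^(p/s) Γ(μ)))·{ (σ/(σ+δ))·[ψ(μ+p/s) - log(μσ)] + (δ/(σ+δ))·((μ+p/s)/μ)·[ψ(μ+p/s+1) - log(μσ)] }. -/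
open Real MeasureTheory ProbabilityTheory Set Filter
open scoped NNReal ENNReal

section Aux

/-- Integrability of the log-weighted Gamma integrand. -/
lemma integrableOn_log_gamma {t : ℝ} (ht : 0 < t) :
    IntegrableOn (fun x : ℝ => x ^ (t - 1) * (Real.log x * Real.exp (-x))) (Ioi 0) := by
  have hre : 0 < (t : ℂ).re := by simpa using ht
  have H := mellin_hasDerivAt_of_isBigO_rpow (E := ℂ)
    (f := fun x : ℝ => (Real.exp (-x) : ℂ)) (s := (t : ℂ)) (a := t + 1) (b := 0)
    ?_ ?_ (by simpa using lt_add_one t) ?_ (by simpa using ht)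
  · have h1 : MellinConvergent (fun x : ℝ => Real.log x • (Real.exp (-x) : ℂ)) (t : ℂ) := H.1
    unfold MellinConvergent at h1
    have h2 := h1.re
    refine (IntegrableOn.congr_fun h2 ?_ measurableSet_Ioi)
    intro x hx
    have hx0 : (0:ℝ) < x := hx
    simp only [Complex.real_smul, smul_eq_mul]
    rw [show ((t:ℂ) - 1) = ((t - 1 : ℝ) : ℂ) by push_cast; ring,
      ← Complex.ofReal_cpow hx0.le, ← Complex.ofReal_mul, ← Complex.ofReal_mul]
    simp only [RCLike.re_to_complex, Complex.ofReal_re]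
  · refine (Continuous.continuousOn ?_).locallyIntegrableOn measurableSet_Ioi
    exact Complex.continuous_ofReal.comp (Real.continuous_exp.comp continuous_neg)
  · rw [← Asymptotics.isBigO_norm_left]
    simp_rw [Complex.norm_real,
      Asymptotics.isBigO_norm_left]
    simpa only [neg_one_mul] using
      (isLittleO_exp_neg_mul_rpow_atTop zero_lt_one _).isBigO
  · simp_rw [neg_zero, Real.rpow_zero]
    refine Asymptotics.isBigO_const_of_tendsto (?_ : Tendsto _ _ (nhds (1 : ℂ))) one_ne_zero
    rw [(by simp : (1 : ℂ) = Real.exp (-0))]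
    exact (Complex.continuous_ofReal.comp
      (Real.continuous_exp.comp continuous_neg)).continuousWithinAt

lemma hasDerivAt_realGamma {t : ℝ} (ht : 0 < t) :
    HasDerivAt Real.Gamma
      (∫ x in Ioi (0:ℝ), x ^ (t - 1) * (Real.log x * Real.exp (-x))) t := by
  have hre : 0 < (t : ℂ).re := by simpa using ht
  have h1 := Complex.hasDerivAt_GammaIntegral hre
  have heq : Complex.Gamma =ᶠ[nhds (t : ℂ)] Complex.GammaIntegral := by
    filter_upwards [(Complex.continuous_re.isOpen_preimage _ isOpen_Ioi).mem_nhds hre] with z hz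
    exact Complex.Gamma_eq_integral hz
  have h2 : HasDerivAt Complex.Gamma
      (∫ x : ℝ in Ioi 0, (x:ℂ) ^ ((t:ℂ) - 1) * (Real.log x * Real.exp (-x))) (t : ℂ) :=
    h1.congr_of_eventuallyEq heq
  have hI : (∫ x : ℝ in Ioi 0, (x:ℂ) ^ ((t:ℂ) - 1) * (Real.log x * Real.exp (-x))) =
      ((∫ x in Ioi (0:ℝ), x ^ (t - 1) * (Real.log x * Real.exp (-x)) : ℝ) : ℂ) := by
    rw [show ((∫ x in Ioi (0:ℝ), x ^ (t - 1) * (Real.log x * Real.exp (-x)) : ℝ) : ℂ) =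
        ∫ x in Ioi (0:ℝ), ((x ^ (t - 1) * (Real.log x * Real.exp (-x)) : ℝ) : ℂ) from
      (integral_ofReal (𝕜 := ℂ)).symm]
    refine setIntegral_congr_fun measurableSet_Ioi fun x hx => ?_
    have hx0 : (0:ℝ) < x := hx
    rw [show ((t:ℂ) - 1) = ((t - 1 : ℝ) : ℂ) by push_cast; ring,
      ← Complex.ofReal_cpow hx0.le]
    push_cast
    ring
  rw [hI] at h2
  have h3 := h2.real_of_complex
  simpa [Complex.Gamma_ofReal] using h3


lemma aux_integrableOn_h {r : ℝ} {t : ℝ} (ht : 0 < t) :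
    IntegrableOn (fun u : ℝ => u ^ (t - 1) * Real.exp (-u) * (Real.log u - Real.log r))
      (Ioi 0) := by
  have h1 := integrableOn_log_gamma ht
  have h2 := (Real.GammaIntegral_convergent ht).const_mul (Real.log r)
  refine IntegrableOn.congr_fun (h1.sub h2) (fun x _ => ?_) measurableSet_Ioi
  simp only [Pi.sub_apply]
  ring

lemma integrableOn_gamma_log {t r : ℝ} (ht : 0 < t) (hr : 0 < r) :
    IntegrableOn (fun x : ℝ => x ^ (t - 1) * Real.exp (-(r * x)) * Real.log x) (Ioi 0) := by
  have h0 := aux_integrableOn_h (r := r) ht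
  have key : IntegrableOn
      (fun x : ℝ => (r * x) ^ (t - 1) * Real.exp (-(r * x)) * (Real.log (r * x) - Real.log r))
      (Ioi 0) := by
    have h3 := (integrableOn_Ioi_comp_mul_left_iff
      (fun u : ℝ => u ^ (t - 1) * Real.exp (-u) * (Real.log u - Real.log r)) 0 hr).2
    rw [mul_zero] at h3
    exact h3 h0
  refine IntegrableOn.congr_fun (key.const_mul (r ^ (1 - t))) (fun x hx => ?_) measurableSet_Ioi
  have hx0 : (0:ℝ) < x := hx
  have hrt : r ^ (1 - t) * (r * x) ^ (t - 1) = x ^ (t - 1) := by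
    rw [Real.mul_rpow hr.le hx0.le, ← mul_assoc, ← Real.rpow_add hr,
      show (1 - t + (t - 1)) = 0 by ring, Real.rpow_zero, one_mul]
  rw [Real.log_mul hr.ne' hx0.ne',
    show Real.log r + Real.log x - Real.log r = Real.log x by ring,
    ← mul_assoc, ← mul_assoc, hrt]

lemma integral_gamma_log {t r : ℝ} (ht : 0 < t) (hr : 0 < r) :
    ∫ x in Ioi (0:ℝ), x ^ (t - 1) * Real.exp (-(r * x)) * Real.log x
      = r ^ (-t) * (deriv Real.Gamma t - Real.log r * Real.Gamma t) := by
  have hD : deriv Real.Gamma t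
      = ∫ u in Ioi (0:ℝ), u ^ (t - 1) * (Real.log u * Real.exp (-u)) :=
    (hasDerivAt_realGamma ht).deriv
  have hG : Real.Gamma t = ∫ u in Ioi (0:ℝ), Real.exp (-u) * u ^ (t - 1) :=
    Real.Gamma_eq_integral ht
  have hH : (∫ u in Ioi (0:ℝ), u ^ (t - 1) * Real.exp (-u) * (Real.log u - Real.log r))
      = deriv Real.Gamma t - Real.log r * Real.Gamma t := by
    have h1 := integrableOn_log_gamma ht
    have h2 := (Real.GammaIntegral_convergent ht).const_mul (Real.log r)
    rw [setIntegral_congr_fun measurableSet_Ioi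
      (show EqOn (fun u : ℝ => u ^ (t - 1) * Real.exp (-u) * (Real.log u - Real.log r))
        (fun u : ℝ => u ^ (t - 1) * (Real.log u * Real.exp (-u))
          - Real.log r * (Real.exp (-u) * u ^ (t - 1))) (Ioi 0) from fun x _ => by ring),
      integral_sub h1 h2, integral_const_mul, hD, hG]
  have hsub := integral_comp_mul_left_Ioi
    (fun u : ℝ => u ^ (t - 1) * Real.exp (-u) * (Real.log u - Real.log r)) 0 hr
  rw [mul_zero] at hsub
  have hpt : EqOn (fun x : ℝ => x ^ (t - 1) * Real.exp (-(r * x)) * Real.log x)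
      (fun x : ℝ => r ^ (1 - t) *
        ((r * x) ^ (t - 1) * Real.exp (-(r * x)) * (Real.log (r * x) - Real.log r)))
      (Ioi 0) := by
    intro x hx
    have hx0 : (0:ℝ) < x := hx
    have hrt : r ^ (1 - t) * (r * x) ^ (t - 1) = x ^ (t - 1) := by
      rw [Real.mul_rpow hr.le hx0.le, ← mul_assoc, ← Real.rpow_add hr,
        show (1 - t + (t - 1)) = 0 by ring, Real.rpow_zero, one_mul]
    simp only
    rw [Real.log_mul hr.ne' hx0.ne',
      show Real.log r + Real.log x - Real.log r = Real.log x by ring,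
      ← mul_assoc, ← mul_assoc, hrt]
  rw [setIntegral_congr_fun measurableSet_Ioi hpt, integral_const_mul, hsub, hH,
    smul_eq_mul, ← mul_assoc, ← Real.rpow_neg_one r, ← Real.rpow_add hr,
    show (1 - t + -1) = -t by ring]

lemma gamma_moment_log (a r q : ℝ) (ha : 0 < a) (hr : 0 < r) (hq : 0 < a + q) :
    Integrable (fun x : ℝ => x ^ q * Real.log x) (gammaMeasure a r) ∧
    ∫ x, x ^ q * Real.log x ∂(gammaMeasure a r)
      = Real.Gamma (a + q) / (r ^ q * Real.Gamma a) * (digamma (a + q) - Real.log r) := by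
  set g : ℝ → ℝ := fun x => x ^ q * Real.log x with hg
  set f : ℝ → ℝ≥0 := fun x => (gammaPDFReal a r x).toNNReal with hfdef
  have hf : Measurable f := (measurable_gammaPDFReal a r).real_toNNReal
  have hmeas : gammaMeasure a r = volume.withDensity (fun x => (f x : ℝ≥0∞)) := rfl
  set F : ℝ → ℝ := fun x => gammaPDFReal a r x * (x ^ q * Real.log x) with hF
  have hsmul : (fun x => f x • g x) = F := by
    funext x
    simp only [hfdef, NNReal.smul_def, smul_eq_mul, hF, hg,
      Real.coe_toNNReal _ (gammaPDFReal_nonneg ha hr x)]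
  have hFind : F = (Ioi (0:ℝ)).indicator F := by
    funext x
    by_cases hx : x ∈ Ioi (0:ℝ)
    · rw [Set.indicator_of_mem hx]
    · rw [Set.indicator_of_notMem hx]
      have hle : x ≤ 0 := not_lt.1 (by simpa using hx)
      rcases lt_or_eq_of_le hle with h | h
      · simp [hF, gammaPDFReal, not_le.2 h]
      · subst h; simp [hF]
  have hEq : EqOn (fun x : ℝ => r ^ a / Real.Gamma a *
      (x ^ (a + q - 1) * Real.exp (-(r * x)) * Real.log x)) F (Ioi 0) := by
    intro x hx
    have hx0 : (0:ℝ) < x := hx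
    simp only [hF, gammaPDFReal, if_pos hx0.le]
    rw [show a + q - 1 = (a - 1) + q by ring, Real.rpow_add hx0]
    ring
  have hIoi : IntegrableOn F (Ioi 0) :=
    IntegrableOn.congr_fun ((integrableOn_gamma_log hq hr).const_mul _) hEq measurableSet_Ioi
  have hFint : Integrable F := by
    rw [hFind]
    exact (integrable_indicator_iff measurableSet_Ioi).2 hIoi
  have hint : Integrable g (gammaMeasure a r) := by
    rw [hmeas, integrable_withDensity_iff_integrable_smul hf, hsmul]
    exact hFint
  refine ⟨hint, ?_⟩
  have hval : ∫ x, g x ∂(gammaMeasure a r) = ∫ x in Ioi (0:ℝ), F x := by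
    rw [hmeas, integral_withDensity_eq_integral_smul hf, hsmul]
    nth_rewrite 1 [hFind]
    rw [integral_indicator measurableSet_Ioi]
  rw [hval, ← setIntegral_congr_fun measurableSet_Ioi hEq, integral_const_mul,
    integral_gamma_log hq hr]
  have hGa : Real.Gamma a ≠ 0 := (Real.Gamma_pos_of_pos ha).ne'
  have hGaq : Real.Gamma (a + q) ≠ 0 := (Real.Gamma_pos_of_pos hq).ne'
  have hra : r ^ a * r ^ (-(a + q)) = (r ^ q)⁻¹ := by
    rw [← Real.rpow_add hr, ← Real.rpow_neg hr.le]
    congr 1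
    ring
  have hrq : (r:ℝ) ^ q ≠ 0 := (Real.rpow_pos_of_pos hr q).ne'
  rw [digamma]
  rw [show r ^ a / Real.Gamma a * (r ^ (-(a + q)) *
      (deriv Real.Gamma (a + q) - Real.log r * Real.Gamma (a + q)))
      = (r ^ a * r ^ (-(a + q))) *
        ((deriv Real.Gamma (a + q) - Real.log r * Real.Gamma (a + q)) / Real.Gamma a) by ring,
    hra]
  field_simp

lemma ae_pos_of_map_gamma {Ω : Type*} [MeasurableSpace Ω] (P : Measure Ω) {Z : Ω → ℝ}
    (hm : Measurable Z) {a r : ℝ} (hmap : Measure.map Z P = gammaMeasure a r) :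
    ∀ᵐ ω ∂P, 0 < Z ω := by
  have h0 : gammaMeasure a r (Iic 0) = 0 := by
    rw [gammaMeasure, withDensity_apply _ measurableSet_Iic,
      setLIntegral_congr (Iio_ae_eq_Iic (a := (0:ℝ))).symm]
    exact lintegral_gammaPDF_of_nonpos le_rfl
  have hP : P (Z ⁻¹' Iic 0) = 0 := by
    have h1 := Measure.map_apply (μ := P) hm (measurableSet_Iic : MeasurableSet (Iic (0:ℝ)))
    rw [hmap, h0] at h1
    exact h1.symm
  rw [ae_iff]
  convert hP using 2
  ext ω
  simp [not_lt]


end Aux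

/-- With `X` from the weighted exponential family (mixture representation with generator
`T(x) = x^(-s)`), for any real `p` with `μ + p/s > 0`,
`E[X^(-p) log X] = -(1/s)·(Γ(μ+p/s)/((μσ)^(p/s) Γ(μ)))·{(σ/(σ+δ))[ψ(μ+p/s) - log(μσ)]
  + (δ/(σ+δ))((μ+p/s)/μ)[ψ(μ+p/s+1) - log(μσ)]}`. -/
theorem weighted_family_neg_p_log_moment {Ω : Type*} [MeasurableSpace Ω]
    (P : Measure Ω) [IsProbabilityMeasure P]
    (μ σ δ s : ℝ) (hμ : 0 < μ) (hσ : 0 < σ) (hδ : δ = 0 ∨ δ = 1) (hs : s ≠ 0)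
    (B Z₁ Z₂ : Ω → ℝ)
    (hB : Measurable B) (hZ₁m : Measurable Z₁) (hZ₂m : Measurable Z₂)
    (hB01 : ∀ ω, B ω = 0 ∨ B ω = 1)
    (hBp : (P {ω | B ω = 1}).toReal = δ / (σ + δ))
    (hindep : IndepFun B (fun ω => (Z₁ ω, Z₂ ω)) P)
    (hZ₁ : Measure.map Z₁ P = gammaMeasure μ (μ * σ))
    (hZ₂ : Measure.map Z₂ P = gammaMeasure (μ + 1) (μ * σ))
    (X : Ω → ℝ)
    (hX : ∀ ω, X ω = (1 - B ω) * Z₁ ω ^ (-1 / s) + B ω * Z₂ ω ^ (-1 / s))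
    (p : ℝ) (hp : 0 < μ + p / s) :
    ∫ ω, X ω ^ (-p) * Real.log (X ω) ∂P =
      -(1 / s) * (Real.Gamma (μ + p / s) / ((μ * σ) ^ (p / s) * Real.Gamma μ)) *
        (σ / (σ + δ) * (digamma (μ + p / s) - Real.log (μ * σ)) +
          δ / (σ + δ) * ((μ + p / s) / μ) *
            (digamma (μ + p / s + 1) - Real.log (μ * σ))) := by
  have hR0 : 0 < μ * σ := mul_pos hμ hσ
  have hσδ : 0 < σ + δ := by rcases hδ with h | h <;> subst h <;> linarith
  have hp₂ : 0 < (μ + 1) + p / s := by linarith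
  set c : ℝ := -(1 / s) with hc
  set g : ℝ → ℝ := fun z => z ^ (p / s) * Real.log z with hgdef
  have hgm : Measurable g := (measurable_id.pow_const (p / s)).mul Real.measurable_log
  -- a.e. positivity
  have hZ₁pos := ae_pos_of_map_gamma P hZ₁m hZ₁
  have hZ₂pos := ae_pos_of_map_gamma P hZ₂m hZ₂
  -- pointwise decomposition
  have hdecomp : ∀ᵐ ω ∂P, X ω ^ (-p) * Real.log (X ω)
      = (1 - B ω) * (c * g (Z₁ ω)) + B ω * (c * g (Z₂ ω)) := by
    filter_upwards [hZ₁pos, hZ₂pos] with ω h₁ h₂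
    have key : ∀ z : ℝ, 0 < z →
        (z ^ (-1 / s)) ^ (-p) * Real.log (z ^ (-1 / s)) = c * g z := by
      intro z hz
      rw [← Real.rpow_mul hz.le, Real.log_rpow hz,
        show (-1 / s) * (-p) = p / s by ring, hgdef, hc]
      ring
    rcases hB01 ω with h | h <;> rw [hX ω, h]
    · rw [show (1 - (0:ℝ)) * Z₁ ω ^ (-1 / s) + 0 * Z₂ ω ^ (-1 / s) = Z₁ ω ^ (-1/s) by ring,
        key _ h₁]
      ring
    · rw [show (1 - (1:ℝ)) * Z₁ ω ^ (-1 / s) + 1 * Z₂ ω ^ (-1 / s) = Z₂ ω ^ (-1/s) by ring,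
        key _ h₂]
      ring
  -- moments
  have M₁ := gamma_moment_log μ (μ * σ) (p / s) hμ hR0 hp
  have M₂ := gamma_moment_log (μ + 1) (μ * σ) (p / s) (by linarith) hR0 hp₂
  have hgZ₁ : Integrable (fun ω => g (Z₁ ω)) P := by
    have h := M₁.1
    rw [← hZ₁] at h
    exact (integrable_map_measure hgm.aestronglyMeasurable hZ₁m.aemeasurable).1 h
  have hgZ₂ : Integrable (fun ω => g (Z₂ ω)) P := by
    have h := M₂.1
    rw [← hZ₂] at h
    exact (integrable_map_measure hgm.aestronglyMeasurable hZ₂m.aemeasurable).1 h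
  have hintZ₁ : ∫ ω, g (Z₁ ω) ∂P
      = Real.Gamma (μ + p / s) / ((μ * σ) ^ (p / s) * Real.Gamma μ)
        * (digamma (μ + p / s) - Real.log (μ * σ)) := by
    rw [← integral_map hZ₁m.aemeasurable hgm.aestronglyMeasurable, hZ₁]
    exact M₁.2
  have hintZ₂ : ∫ ω, g (Z₂ ω) ∂P
      = Real.Gamma (μ + 1 + p / s) / ((μ * σ) ^ (p / s) * Real.Gamma (μ + 1))
        * (digamma (μ + 1 + p / s) - Real.log (μ * σ)) := by
    rw [← integral_map hZ₂m.aemeasurable hgm.aestronglyMeasurable, hZ₂]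
    exact M₂.2
  -- B as an indicator
  have hBset : MeasurableSet {ω | B ω = 1} := hB (measurableSet_singleton 1)
  have hBind : B = Set.indicator {ω | B ω = 1} (fun _ => (1:ℝ)) := by
    funext ω
    rcases hB01 ω with h | h
    · rw [Set.indicator_of_notMem (by simp [h] : ω ∉ {ω | B ω = 1}), h]
    · rw [Set.indicator_of_mem (by simpa using h), h]
  have hBint : Integrable B P := by
    rw [hBind]
    exact (integrable_const (1:ℝ)).indicator hBset
  have hIB : ∫ ω, B ω ∂P = δ / (σ + δ) := by
    rw [show ∫ ω, B ω ∂P = ∫ ω, ({ω | B ω = 1}).indicator (fun _ => (1:ℝ)) ω ∂P by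
        rw [← hBind],
      integral_indicator_const (1:ℝ) hBset, smul_eq_mul, mul_one, measureReal_def, hBp]
  have h1Bint : Integrable (fun ω => 1 - B ω) P := (integrable_const (1:ℝ)).sub hBint
  have hI1B : ∫ ω, (1 - B ω) ∂P = σ / (σ + δ) := by
    rw [integral_sub (integrable_const 1) hBint, hIB, integral_const, probReal_univ, one_smul]
    field_simp
    ring
  -- independence products
  have hind₁ : IndepFun (fun ω => 1 - B ω) (fun ω => c * g (Z₁ ω)) P :=
    hindep.comp (measurable_const.sub measurable_id)
      ((hgm.comp measurable_fst).const_mul c)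
  have hind₂ : IndepFun B (fun ω => c * g (Z₂ ω)) P :=
    hindep.comp measurable_id ((hgm.comp measurable_snd).const_mul c)
  have hT₁ : ∫ ω, (1 - B ω) * (c * g (Z₁ ω)) ∂P
      = (σ / (σ + δ)) * (c * ∫ ω, g (Z₁ ω) ∂P) := by
    rw [hind₁.integral_fun_mul_eq_mul_integral ((measurable_const.sub hB).aestronglyMeasurable)
      ((hgm.comp hZ₁m).const_mul c).aestronglyMeasurable, hI1B, integral_const_mul]
  have hT₂ : ∫ ω, B ω * (c * g (Z₂ ω)) ∂P
      = (δ / (σ + δ)) * (c * ∫ ω, g (Z₂ ω) ∂P) := by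
    rw [hind₂.integral_fun_mul_eq_mul_integral hB.aestronglyMeasurable
      ((hgm.comp hZ₂m).const_mul c).aestronglyMeasurable, hIB, integral_const_mul]
  -- integrability of the two terms
  have hi₁ : Integrable (fun ω => (1 - B ω) * (c * g (Z₁ ω))) P := by
    refine (hgZ₁.const_mul c).bdd_mul (c := 1) ((measurable_const.sub hB).aestronglyMeasurable)
      (ae_of_all _ fun ω => ?_)
    rcases hB01 ω with h | h <;> simp [h]
  have hi₂ : Integrable (fun ω => B ω * (c * g (Z₂ ω))) P := by
    refine (hgZ₂.const_mul c).bdd_mul (c := 1) hB.aestronglyMeasurable (ae_of_all _ fun ω => ?_)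
    rcases hB01 ω with h | h <;> simp [h]
  rw [integral_congr_ae hdecomp, integral_add hi₁ hi₂, hT₁, hT₂, hintZ₁, hintZ₂]
  -- final algebra
  have hGμ : Real.Gamma μ ≠ 0 := (Real.Gamma_pos_of_pos hμ).ne'
  have hGt : Real.Gamma (μ + p / s) ≠ 0 := (Real.Gamma_pos_of_pos hp).ne'
  have hrq : (μ * σ) ^ (p / s) ≠ 0 := (Real.rpow_pos_of_pos hR0 _).ne'
  rw [show μ + 1 + p / s = (μ + p / s) + 1 by ring,
    Real.Gamma_add_one hp.ne', Real.Gamma_add_one hμ.ne']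
  field_simp
end

section
/- Let μ, σ > 0, δ ∈ {0,1}, s ≠ 0, and X as in the weighted exponential family with generator T(x) = x^(-s). Define m₁ = E[X^(-s) log(X^(-s))/(1 + δX^(-s))], m₂ = E[X^(-s) log(X^(-s))], m₃ = E[log(X^(-s))]. Then μ = (δ·m₁ + 1)/(σ·m₂ - m₃). -/
open Real MeasureTheory ProbabilityTheory Set Filter Topology
open scoped ENNReal NNReal

namespace WFaux

lemma meas_lre (b r : ℝ) :
    Measurable (fun x => Real.log x * (x ^ (b - 1) * Real.exp (-(r * x)))) := by
  apply Real.measurable_log.mul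
  apply Measurable.mul (by measurability)
  exact ((measurable_const.mul measurable_id).neg).exp

lemma integrableOn_rpow_exp {b r : ℝ} (hb : 0 < b) (hr : 0 < r) :
    IntegrableOn (fun x => x ^ (b - 1) * Real.exp (-(r * x))) (Ioi (0:ℝ)) := by
  have h0 : IntegrableOn (fun x => Real.exp (-x) * x ^ (b - 1)) (Ioi (0:ℝ)) :=
    Real.GammaIntegral_convergent hb
  have h1 : IntegrableOn (fun x => Real.exp (-(r*x)) * (r*x) ^ (b - 1)) (Ioi (0:ℝ)) := by
    have h := integrableOn_Ioi_comp_mul_left_iff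
      (fun x => Real.exp (-x) * x ^ (b - 1)) 0 hr
    rw [mul_zero] at h
    exact h.2 h0
  have h2 : IntegrableOn
      (fun x => r ^ (1-b) * (Real.exp (-(r*x)) * (r*x) ^ (b-1))) (Ioi (0:ℝ)) :=
    h1.const_mul (r ^ (1 - b))
  refine h2.congr_fun (fun x hx => ?_) measurableSet_Ioi
  have hx0 : (0:ℝ) < x := hx
  simp only [mul_rpow hr.le hx0.le]
  have : r ^ (1-b) * (Real.exp (-(r*x)) * (r ^ (b-1) * x ^ (b-1)))
      = (r ^ (1-b) * r ^ (b-1)) * (x ^ (b-1) * Real.exp (-(r*x))) := by ring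
  rw [this, ← Real.rpow_add hr]
  norm_num

lemma integral_rpow_exp {b r : ℝ} (hb : 0 < b) (hr : 0 < r) :
    ∫ x in Ioi (0:ℝ), x ^ (b - 1) * Real.exp (-(r * x)) = Real.Gamma b / r ^ b := by
  rw [integral_rpow_mul_exp_neg_mul_Ioi hb hr, div_rpow zero_le_one hr.le, one_rpow,
    one_div, inv_mul_eq_div]

lemma integrableOn_log_rpow_exp {b r : ℝ} (hb : 0 < b) (hr : 0 < r) :
    IntegrableOn (fun x => Real.log x * (x ^ (b - 1) * Real.exp (-(r * x)))) (Ioi (0:ℝ)) := by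
  have hmeas : AEStronglyMeasurable (fun x => Real.log x * (x ^ (b - 1) * Real.exp (-(r * x)))) volume := (meas_lre b r).aestronglyMeasurable
  rw [← Ioc_union_Ioi_eq_Ioi (zero_le_one : (0:ℝ) ≤ 1)]
  apply IntegrableOn.union
  · -- on Ioc 0 1, dominate by (2/b) * x ^ (b/2 - 1)
    have hint : IntegrableOn (fun x : ℝ => (2/b) * x ^ (b/2 - 1)) (Ioc (0:ℝ) 1) := by
      have h := intervalIntegral.intervalIntegrable_rpow' (a := 0) (b := 1)
        (r := b/2 - 1) (by linarith)
      rw [intervalIntegrable_iff_integrableOn_Ioc_of_le zero_le_one] at h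
      exact h.const_mul _
    apply hint.mono' hmeas.restrict
    filter_upwards [ae_restrict_mem measurableSet_Ioc] with x hx
    obtain ⟨hx0, hx1⟩ := hx
    have hxb : (0:ℝ) < x ^ (b-1) := rpow_pos_of_pos hx0 _
    have hexp : Real.exp (-(r*x)) ≤ 1 := by
      rw [Real.exp_le_one_iff, neg_nonpos]; positivity
    have hlog : |Real.log x| ≤ (2/b) * x ^ (-(b/2)) := by
      rw [abs_of_nonpos (Real.log_nonpos hx0.le hx1)]
      calc -Real.log x = Real.log x⁻¹ := (Real.log_inv x).symm
        _ ≤ (x⁻¹) ^ (b/2) / (b/2) := Real.log_le_rpow_div (inv_nonneg.2 hx0.le) (half_pos hb)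
        _ = (2/b) * x ^ (-(b/2)) := by
            rw [Real.inv_rpow hx0.le, Real.rpow_neg hx0.le]
            have hb' : b ≠ 0 := ne_of_gt hb
            field_simp
    -- combine the bounds
    rw [norm_mul, norm_mul, Real.norm_eq_abs, Real.norm_eq_abs, Real.norm_eq_abs,
      abs_of_nonneg hxb.le, abs_of_nonneg (Real.exp_pos _).le]
    calc |Real.log x| * (x ^ (b-1) * Real.exp (-(r*x)))
        ≤ ((2/b) * x ^ (-(b/2))) * (x ^ (b-1) * 1) := by
          apply mul_le_mul hlog ?_ (by positivity) (by positivity)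
          exact mul_le_mul_of_nonneg_left hexp hxb.le
      _ = (2/b) * x ^ (b/2 - 1) := by
          rw [mul_one, mul_assoc, ← Real.rpow_add hx0]
          ring_nf
  · -- on Ioi 1, dominate by x ^ ((b+1)-1) * exp (-(r*x))
    have hint : IntegrableOn (fun x : ℝ => x ^ ((b+1) - 1) * Real.exp (-(r * x))) (Ioi 1) :=
      (integrableOn_rpow_exp (by linarith) hr).mono_set (Ioi_subset_Ioi zero_le_one)
    apply hint.mono' hmeas.restrict
    filter_upwards [ae_restrict_mem measurableSet_Ioi] with x hx
    have hx1 : (1:ℝ) < x := hx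
    have hx0 : (0:ℝ) < x := lt_trans zero_lt_one hx1
    have hlog0 : 0 ≤ Real.log x := Real.log_nonneg hx1.le
    rw [norm_mul, norm_mul, Real.norm_eq_abs, Real.norm_eq_abs, Real.norm_eq_abs,
      abs_of_nonneg hlog0, abs_of_nonneg (rpow_pos_of_pos hx0 _).le,
      abs_of_nonneg (Real.exp_pos _).le, ← mul_assoc]
    apply mul_le_mul_of_nonneg_right ?_ (Real.exp_pos _).le
    calc Real.log x * x ^ (b-1) ≤ x * x ^ (b-1) := by
          apply mul_le_mul_of_nonneg_right ?_ (rpow_pos_of_pos hx0 _).le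
          linarith [Real.log_le_sub_one_of_pos hx0]
      _ = x ^ ((b+1)-1) := by
          rw [← Real.rpow_one_add' hx0.le (by linarith : (1:ℝ) + (b-1) ≠ 0)]
          ring_nf


lemma Jrec {b r : ℝ} (hb : 0 < b) (hr : 0 < r) :
    r * ∫ x in Ioi (0:ℝ), Real.log x * (x ^ ((b+1) - 1) * Real.exp (-(r * x)))
      = b * (∫ x in Ioi (0:ℝ), Real.log x * (x ^ (b - 1) * Real.exp (-(r * x))))
        + Real.Gamma b / r ^ b := by
  set F : ℝ → ℝ := fun x => x ^ b * Real.exp (-(r*x)) * Real.log x with hF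
  set G : ℝ → ℝ := fun x =>
    b * (Real.log x * (x ^ (b-1) * Real.exp (-(r*x))))
    - r * (Real.log x * (x ^ ((b+1)-1) * Real.exp (-(r*x))))
    + x ^ (b-1) * Real.exp (-(r*x)) with hG
  have hint1 := integrableOn_log_rpow_exp hb hr
  have hint2 := integrableOn_log_rpow_exp (show 0 < b+1 by linarith) hr
  have hint3 := integrableOn_rpow_exp hb hr
  have hGint : IntegrableOn G (Ioi (0:ℝ)) :=
    ((hint1.const_mul b).sub (hint2.const_mul r)).add hint3
  have h0 : F 0 = 0 := by simp [hF]
  have hderiv : ∀ x ∈ Ioi (0:ℝ), HasDerivAt F (G x) x := by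
    intro x hx
    have hx0 : (0:ℝ) < x := hx
    have h1 : HasDerivAt (fun y : ℝ => y ^ b) (b * x ^ (b-1)) x :=
      Real.hasDerivAt_rpow_const (Or.inl hx0.ne')
    have h2 : HasDerivAt (fun y : ℝ => Real.exp (-(r*y))) (-r * Real.exp (-(r*x))) x := by
      have := (((hasDerivAt_id x).const_mul r).neg).exp
      simpa [mul_comm] using this
    have h3 : HasDerivAt Real.log x⁻¹ x := Real.hasDerivAt_log hx0.ne'
    have h := (h1.mul h2).mul h3
    refine h.congr_deriv ?_
    have e1 : x ^ ((b+1)-1) = x ^ b := by norm_num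
    have e2 : x ^ (b-1) = x ^ b * x⁻¹ := by
      rw [Real.rpow_sub hx0, Real.rpow_one, div_eq_mul_inv]
    rw [hG]
    simp only [e1, e2, Pi.mul_apply]
    ring
  have hcont : ContinuousWithinAt F (Ici (0:ℝ)) 0 := by
    rw [show Ici (0:ℝ) = insert 0 (Ioi 0) from Set.Ioi_insert.symm,
      continuousWithinAt_insert_self]
    unfold ContinuousWithinAt
    rw [h0]
    have hlim : Tendsto (fun x : ℝ => (Real.log x * x ^ b) * Real.exp (-(r*x)))
        (𝓝[>] 0) (𝓝 0) := by
      have hA := tendsto_log_mul_rpow_nhdsGT_zero hb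
      have hB : Tendsto (fun x : ℝ => Real.exp (-(r*x))) (𝓝[>] (0:ℝ)) (𝓝 1) := by
        have : Tendsto (fun x : ℝ => Real.exp (-(r*x))) (𝓝 (0:ℝ)) (𝓝 (Real.exp (-(r*0)))) :=
          (Real.continuous_exp.comp ((continuous_const.mul continuous_id).neg)).tendsto 0
        simpa using this.mono_left nhdsWithin_le_nhds
      simpa using hA.mul hB
    apply hlim.congr
    intro x; rw [hF]; ring
  have htop : Tendsto F atTop (𝓝 0) := by
    apply tendsto_of_tendsto_of_tendsto_of_le_of_le' tendsto_const_nhds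
      (tendsto_rpow_mul_exp_neg_mul_atTop_nhds_zero (b+1) r hr)
    · filter_upwards [eventually_ge_atTop (1:ℝ)] with x hx1
      have hx0 : (0:ℝ) < x := lt_of_lt_of_le zero_lt_one hx1
      have : 0 ≤ Real.log x := Real.log_nonneg hx1
      rw [hF]
      positivity
    · filter_upwards [eventually_ge_atTop (1:ℝ)] with x hx1
      have hx0 : (0:ℝ) < x := lt_of_lt_of_le zero_lt_one hx1
      rw [hF]
      have e : x ^ (b+1) = x ^ b * x := by
        rw [Real.rpow_add hx0, Real.rpow_one]
      rw [e]
      calc x ^ b * Real.exp (-(r*x)) * Real.log x ≤ x ^ b * Real.exp (-(r*x)) * x := by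
            apply mul_le_mul_of_nonneg_left ?_ (by positivity)
            linarith [Real.log_le_sub_one_of_pos hx0]
        _ = x ^ b * x * Real.exp (-(r*x)) := by ring
        _ = x ^ b * x * Real.exp (-r*x) := by rw [neg_mul]
  have key := integral_Ioi_of_hasDerivAt_of_tendsto hcont hderiv hGint htop
  rw [h0, sub_zero] at key
  have hsub : IntegrableOn (fun x => b * (Real.log x * (x ^ (b-1) * Real.exp (-(r*x))))
      - r * (Real.log x * (x ^ ((b+1)-1) * Real.exp (-(r*x))))) (Ioi (0:ℝ)) :=
    (hint1.const_mul b).sub (hint2.const_mul r)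
  rw [hG] at key
  rw [integral_add hsub hint3, integral_sub (hint1.const_mul b) (hint2.const_mul r),
    integral_const_mul, integral_const_mul, integral_rpow_exp hb hr] at key
  linarith

lemma pdf_ae_eq (a r : ℝ) (g : ℝ → ℝ) :
    (fun x => g x * gammaPDFReal a r x)
      =ᵐ[volume] (Ioi (0:ℝ)).indicator (fun x => g x * gammaPDFReal a r x) := by
  filter_upwards [compl_mem_ae_iff.2 (measure_singleton (0:ℝ))] with x hx
  rcases lt_trichotomy x 0 with h | h | h
  · rw [indicator_of_notMem (fun hc => absurd (mem_Ioi.1 hc) (not_lt.2 h.le))]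
    rw [gammaPDFReal, if_neg (not_le.2 h), mul_zero]
  · exact absurd h hx
  · rw [indicator_of_mem (mem_Ioi.2 h)]

lemma pdf_eq_on {a r : ℝ} {x : ℝ} (hx : x ∈ Ioi (0:ℝ)) :
    gammaPDFReal a r x = r ^ a / Real.Gamma a * (x ^ (a-1) * Real.exp (-(r*x))) := by
  rw [gammaPDFReal, if_pos (le_of_lt hx), mul_assoc]

lemma gamma_integrable {a r : ℝ} (ha : 0 < a) (hr : 0 < r) {g : ℝ → ℝ}
    (hg : Measurable g)
    (hint : IntegrableOn (fun x => g x * (x ^ (a-1) * Real.exp (-(r*x)))) (Ioi (0:ℝ))) :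
    Integrable g (gammaMeasure a r) := by
  rw [gammaMeasure, show gammaPDF a r = fun x => ENNReal.ofReal (gammaPDFReal a r x) from rfl,
    integrable_withDensity_iff ((measurable_gammaPDFReal a r).ennreal_ofReal)
    (Filter.Eventually.of_forall (fun x => ENNReal.ofReal_lt_top))]
  have heq : (fun x => g x * (ENNReal.ofReal (gammaPDFReal a r x)).toReal)
      = fun x => g x * gammaPDFReal a r x := by
    funext x
    rw [ENNReal.toReal_ofReal (gammaPDFReal_nonneg ha hr x)]
  rw [heq]
  rw [integrable_congr (pdf_ae_eq a r g), integrable_indicator_iff measurableSet_Ioi]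
  have : IntegrableOn (fun x => (r ^ a / Real.Gamma a) *
      (g x * (x ^ (a-1) * Real.exp (-(r*x))))) (Ioi (0:ℝ)) := hint.const_mul _
  refine this.congr_fun (fun x hx => ?_) measurableSet_Ioi
  rw [pdf_eq_on hx]
  ring

lemma gamma_integral_eq {a r : ℝ} (ha : 0 < a) (hr : 0 < r) (g : ℝ → ℝ) :
    ∫ x, g x ∂(gammaMeasure a r)
      = (r ^ a / Real.Gamma a) *
        ∫ x in Ioi (0:ℝ), g x * (x ^ (a-1) * Real.exp (-(r*x))) := by
  rw [gammaMeasure]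
  have hpdf : (gammaPDF a r) = fun x => ((Real.toNNReal (gammaPDFReal a r x) : ℝ≥0∞)) := by
    funext x
    rfl
  rw [hpdf, integral_withDensity_eq_integral_smul
    ((measurable_gammaPDFReal a r).real_toNNReal) g]
  have heq : (fun x => (Real.toNNReal (gammaPDFReal a r x)) • g x)
      = fun x => g x * gammaPDFReal a r x := by
    funext x
    rw [NNReal.smul_def, Real.coe_toNNReal _ (gammaPDFReal_nonneg ha hr x), smul_eq_mul]
    ring
  rw [heq, integral_congr_ae (pdf_ae_eq a r g), integral_indicator measurableSet_Ioi]
  rw [← integral_const_mul]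
  refine setIntegral_congr_fun measurableSet_Ioi (fun x hx => ?_)
  rw [pdf_eq_on hx]
  ring

noncomputable def J (r b : ℝ) : ℝ := ∫ x in Ioi (0:ℝ), Real.log x * (x ^ (b-1) * Real.exp (-(r*x)))

lemma integrable_log_gamma {a r : ℝ} (ha : 0 < a) (hr : 0 < r) :
    Integrable Real.log (gammaMeasure a r) :=
  gamma_integrable ha hr Real.measurable_log (integrableOn_log_rpow_exp ha hr)

lemma integral_log_gamma {a r : ℝ} (ha : 0 < a) (hr : 0 < r) :
    ∫ x, Real.log x ∂(gammaMeasure a r) = (r ^ a / Real.Gamma a) * J r a :=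
  gamma_integral_eq ha hr Real.log

lemma mul_log_eqOn {a r : ℝ} : EqOn (fun x => (x * Real.log x) * (x ^ (a-1) * Real.exp (-(r*x))))
    (fun x => Real.log x * (x ^ ((a+1)-1) * Real.exp (-(r*x)))) (Ioi (0:ℝ)) := by
  intro x hx
  have hx0 : (0:ℝ) < x := hx
  have e : x ^ ((a+1)-1) = x * x ^ (a-1) := by
    rw [show (a+1)-1 = 1 + (a-1) by ring, Real.rpow_add hx0, Real.rpow_one]
  simp only [e]
  ring

lemma integrableOn_mul_log {a r : ℝ} (ha : 0 < a) (hr : 0 < r) :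
    IntegrableOn (fun x => (x * Real.log x) * (x ^ (a-1) * Real.exp (-(r*x)))) (Ioi (0:ℝ)) :=
  (integrableOn_log_rpow_exp (by linarith : (0:ℝ) < a+1) hr).congr_fun
    (fun x hx => (mul_log_eqOn hx).symm) measurableSet_Ioi

lemma integrable_mul_log_gamma {a r : ℝ} (ha : 0 < a) (hr : 0 < r) :
    Integrable (fun x => x * Real.log x) (gammaMeasure a r) :=
  gamma_integrable ha hr (measurable_id.mul Real.measurable_log) (integrableOn_mul_log ha hr)

lemma integral_mul_log_gamma {a r : ℝ} (ha : 0 < a) (hr : 0 < r) :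
    ∫ x, x * Real.log x ∂(gammaMeasure a r) = (r ^ a / Real.Gamma a) * J r (a+1) := by
  rw [gamma_integral_eq ha hr (fun x => x * Real.log x), J,
    setIntegral_congr_fun measurableSet_Ioi mul_log_eqOn]

lemma measurable_ratio (δ : ℝ) :
    Measurable (fun x : ℝ => x * Real.log x / (1 + δ * x)) := by
  apply Measurable.div (measurable_id.mul Real.measurable_log)
  exact measurable_const.add (measurable_const.mul measurable_id)

lemma integrableOn_ratio {a r δ : ℝ} (ha : 0 < a) (hr : 0 < r) (hδ : 0 ≤ δ) :
    IntegrableOn (fun x => (x * Real.log x / (1 + δ * x)) * (x ^ (a-1) * Real.exp (-(r*x))))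
      (Ioi (0:ℝ)) := by
  apply (integrableOn_mul_log ha hr).abs.mono'
  · have hw : Measurable (fun x : ℝ => x ^ (a-1) * Real.exp (-(r*x))) :=
      Measurable.mul (by measurability) ((measurable_const.mul measurable_id).neg.exp)
    exact ((measurable_ratio δ).mul hw).aestronglyMeasurable.restrict
  · filter_upwards [ae_restrict_mem measurableSet_Ioi] with x hx
    have hx0 : (0:ℝ) < x := hx
    have h1 : (1:ℝ) ≤ 1 + δ * x := by nlinarith
    rw [norm_mul, Real.norm_eq_abs, Real.norm_eq_abs, abs_div,
      abs_of_nonneg (by positivity : (0:ℝ) ≤ 1 + δ * x)]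
    calc |x * Real.log x| / (1 + δ * x) * |x ^ (a-1) * Real.exp (-(r*x))|
        ≤ |x * Real.log x| * |x ^ (a-1) * Real.exp (-(r*x))| :=
          mul_le_mul_of_nonneg_right (div_le_self (abs_nonneg _) h1) (abs_nonneg _)
      _ = |(x * Real.log x) * (x ^ (a-1) * Real.exp (-(r*x)))| := (abs_mul _ _).symm

lemma integrable_ratio_gamma {a r δ : ℝ} (ha : 0 < a) (hr : 0 < r) (hδ : 0 ≤ δ) :
    Integrable (fun x => x * Real.log x / (1 + δ * x)) (gammaMeasure a r) :=
  gamma_integrable ha hr (measurable_ratio δ) (integrableOn_ratio ha hr hδ)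

lemma ratio_combine {μ σ : ℝ} (hμ : 0 < μ) (hσ : 0 < σ) :
    σ * ∫ z, z * Real.log z / (1 + z) ∂(gammaMeasure μ (μ*σ))
      + ∫ z, z * Real.log z / (1 + z) ∂(gammaMeasure (μ+1) (μ*σ))
    = σ * ∫ z, z * Real.log z ∂(gammaMeasure μ (μ*σ)) := by
  have hr : 0 < μ * σ := mul_pos hμ hσ
  have hΓ : (0:ℝ) < Real.Gamma μ := Real.Gamma_pos_of_pos hμ
  have hc1 : (μ*σ) ^ (μ+1) / Real.Gamma (μ+1) = σ * ((μ*σ) ^ μ / Real.Gamma μ) := by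
    rw [Real.Gamma_add_one hμ.ne', Real.rpow_add hr, Real.rpow_one]
    field_simp
  have hA : IntegrableOn (fun x => (x * Real.log x / (1 + x)) *
      (x ^ (μ-1) * Real.exp (-((μ*σ)*x)))) (Ioi (0:ℝ)) := by
    have h := integrableOn_ratio (δ := 1) hμ hr zero_le_one
    simpa only [one_mul] using h
  have hB : IntegrableOn (fun x => (x * Real.log x / (1 + x)) *
      (x ^ ((μ+1)-1) * Real.exp (-((μ*σ)*x)))) (Ioi (0:ℝ)) := by
    have h := integrableOn_ratio (δ := 1) (by linarith : (0:ℝ) < μ+1) hr zero_le_one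
    simpa only [one_mul] using h
  rw [gamma_integral_eq hμ hr, gamma_integral_eq (by linarith : (0:ℝ) < μ+1) hr,
    gamma_integral_eq hμ hr, hc1]
  set c := (μ*σ) ^ μ / Real.Gamma μ with hcdef
  calc σ * (c * ∫ x in Ioi (0:ℝ), (x * Real.log x / (1 + x)) *
          (x ^ (μ-1) * Real.exp (-((μ*σ)*x))))
        + (σ * c) * ∫ x in Ioi (0:ℝ), (x * Real.log x / (1 + x)) *
          (x ^ ((μ+1)-1) * Real.exp (-((μ*σ)*x)))
      = ∫ x in Ioi (0:ℝ), ((σ*c) * ((x * Real.log x / (1 + x)) *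
            (x ^ (μ-1) * Real.exp (-((μ*σ)*x))))
          + (σ*c) * ((x * Real.log x / (1 + x)) *
            (x ^ ((μ+1)-1) * Real.exp (-((μ*σ)*x))))) := by
        rw [integral_add (hA.const_mul _) (hB.const_mul _), integral_const_mul,
          integral_const_mul]
        ring
    _ = ∫ x in Ioi (0:ℝ), (σ*c) * ((x * Real.log x) *
          (x ^ (μ-1) * Real.exp (-((μ*σ)*x)))) := by
        refine setIntegral_congr_fun measurableSet_Ioi (fun x hx => ?_)
        have hx0 : (0:ℝ) < x := hx
        have h1x : (0:ℝ) < 1 + x := by linarith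
        have e : x ^ ((μ+1)-1) = x * x ^ (μ-1) := by
          rw [show (μ+1)-1 = 1 + (μ-1) by ring, Real.rpow_add hx0, Real.rpow_one]
        simp only [e]
        field_simp
    _ = σ * (c * ∫ x in Ioi (0:ℝ), (x * Real.log x) *
          (x ^ (μ-1) * Real.exp (-((μ*σ)*x)))) := by
        rw [integral_const_mul]
        ring

end WFaux

open WFaux

/-- With `X` from the weighted exponential family (generator `T(x) = x^(-s)`) and
`m₁ = E[X^(-s)log(X^(-s))/(1+δX^(-s))]`, `m₂ = E[X^(-s)log(X^(-s))]`,
`m₃ = E[log(X^(-s))]`, the exact parameter-recovery identity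
`μ·(σ·m₂ − m₃) = δ·m₁ + 1` holds, i.e. `μ = (δ·m₁+1)/(σ·m₂−m₃)`. -/
theorem weighted_family_mu_identity {Ω : Type*} [MeasurableSpace Ω]
    (P : Measure Ω) [IsProbabilityMeasure P]
    (μ σ δ s : ℝ) (hμ : 0 < μ) (hσ : 0 < σ) (hδ : δ = 0 ∨ δ = 1) (hs : s ≠ 0)
    (B Z₁ Z₂ : Ω → ℝ)
    (hB : Measurable B) (hZ₁m : Measurable Z₁) (hZ₂m : Measurable Z₂)
    (hB01 : ∀ ω, B ω = 0 ∨ B ω = 1)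
    (hBp : (P {ω | B ω = 1}).toReal = δ / (σ + δ))
    (hindep : IndepFun B (fun ω => (Z₁ ω, Z₂ ω)) P)
    (hZ₁ : Measure.map Z₁ P = gammaMeasure μ (μ * σ))
    (hZ₂ : Measure.map Z₂ P = gammaMeasure (μ + 1) (μ * σ))
    (X : Ω → ℝ)
    (hX : ∀ ω, X ω = (1 - B ω) * Z₁ ω ^ (-1 / s) + B ω * Z₂ ω ^ (-1 / s)) :
    μ * (σ * (∫ ω, X ω ^ (-s) * Real.log (X ω ^ (-s)) ∂P) -
        ∫ ω, Real.log (X ω ^ (-s)) ∂P) =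
      δ * (∫ ω, X ω ^ (-s) * Real.log (X ω ^ (-s)) / (1 + δ * X ω ^ (-s)) ∂P) + 1 := by
  have hr : 0 < μ * σ := mul_pos hμ hσ
  have hμ1 : (0:ℝ) < μ + 1 := by linarith
  -- a.e. positivity of Z₁ and Z₂
  have hgamma_null : ∀ a, gammaMeasure a (μ*σ) (Iic 0) = 0 := by
    intro a
    rw [gammaMeasure, withDensity_apply _ measurableSet_Iic,
      setLIntegral_congr (Filter.EventuallyEq.symm Iio_ae_eq_Iic)]
    rw [setLIntegral_congr_fun measurableSet_Iio
      (fun x hx => gammaPDF_of_neg hx)]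
    simp
  have hZpos : ∀ (Z : Ω → ℝ) (a : ℝ), Measurable Z →
      Measure.map Z P = gammaMeasure a (μ*σ) → ∀ᵐ ω ∂P, 0 < Z ω := by
    intro Z a hZm hmap
    have h0 : P (Z ⁻¹' (Iic 0)) = 0 := by
      rw [← Measure.map_apply hZm measurableSet_Iic, hmap]
      exact hgamma_null a
    rw [ae_iff]
    convert h0 using 2
    ext ω
    simp [not_lt]
  have hZ₁pos := hZpos Z₁ μ hZ₁m hZ₁
  have hZ₂pos := hZpos Z₂ (μ+1) hZ₂m hZ₂
  -- pointwise mixture representation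
  have hmix : ∀ (g : ℝ → ℝ), ∀ᵐ ω ∂P,
      g (X ω ^ (-s)) = (1 - B ω) * g (Z₁ ω) + B ω * g (Z₂ ω) := by
    intro g
    filter_upwards [hZ₁pos, hZ₂pos] with ω h1 h2
    have hpow : ∀ z : ℝ, 0 < z → (z ^ (-1/s)) ^ (-s) = z := by
      intro z hz
      rw [← Real.rpow_mul hz.le]
      rw [show (-1/s) * (-s) = 1 by field_simp]
      exact Real.rpow_one z
    rcases hB01 ω with hb | hb
    · rw [hX ω, hb]
      norm_num
      rw [hpow _ h1]
    · rw [hX ω, hb]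
      norm_num
      rw [hpow _ h2]
  -- B as an indicator
  have hSB : MeasurableSet {ω | B ω = 1} := hB (measurableSet_singleton 1)
  have hBind : B = ({ω | B ω = 1}).indicator (fun _ => (1:ℝ)) := by
    funext ω
    rcases hB01 ω with h | h
    · rw [h, indicator_of_notMem]
      simp only [mem_setOf_eq, h]
      norm_num
    · rw [h, indicator_of_mem]
      simpa using h
  have hBint : Integrable B P := by
    rw [hBind]
    exact (integrable_const (1:ℝ)).indicator hSB
  have hEB : ∫ ω, B ω ∂P = δ / (σ + δ) := by
    conv_lhs => rw [hBind]
    rw [integral_indicator hSB]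
    simp [measureReal_def, hBp]
  -- generic mixture integral formula
  have hconv : ∀ (g : ℝ → ℝ), Measurable g →
      Integrable g (gammaMeasure μ (μ*σ)) → Integrable g (gammaMeasure (μ+1) (μ*σ)) →
      ∫ ω, g (X ω ^ (-s)) ∂P
        = (1 - δ/(σ+δ)) * ∫ x, g x ∂(gammaMeasure μ (μ*σ))
          + (δ/(σ+δ)) * ∫ x, g x ∂(gammaMeasure (μ+1) (μ*σ)) := by
    intro g hg hint1 hint2
    have hgZ₁ : Integrable (fun ω => g (Z₁ ω)) P := by
      rw [← hZ₁] at hint1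
      exact (integrable_map_measure hg.aestronglyMeasurable hZ₁m.aemeasurable).1 hint1
    have hgZ₂ : Integrable (fun ω => g (Z₂ ω)) P := by
      rw [← hZ₂] at hint2
      exact (integrable_map_measure hg.aestronglyMeasurable hZ₂m.aemeasurable).1 hint2
    have hind₁ : IndepFun (fun ω => 1 - B ω) (fun ω => g (Z₁ ω)) P := by
      have h := hindep.comp (show Measurable (fun b : ℝ => 1 - b) from
        measurable_const.sub measurable_id) (hg.comp measurable_fst)
      exact h
    have hind₂ : IndepFun B (fun ω => g (Z₂ ω)) P := by
      have h := hindep.comp measurable_id (hg.comp measurable_snd)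
      exact h
    have h1int : Integrable (fun ω => (1 - B ω) * g (Z₁ ω)) P := by
      apply Integrable.bdd_mul (c := 1) hgZ₁ ((measurable_const.sub hB).aestronglyMeasurable)
      refine Filter.Eventually.of_forall (fun ω => ?_)
      rcases hB01 ω with h | h <;> simp [h]
    have h2int : Integrable (fun ω => B ω * g (Z₂ ω)) P := by
      apply Integrable.bdd_mul (c := 1) hgZ₂ hB.aestronglyMeasurable
      refine Filter.Eventually.of_forall (fun ω => ?_)
      rcases hB01 ω with h | h <;> simp [h]
    have hE1B : ∫ ω, (1 - B ω) ∂P = 1 - δ/(σ+δ) := by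
      rw [integral_sub (integrable_const 1) hBint, hEB]
      simp
    have hmap₁ : ∫ ω, g (Z₁ ω) ∂P = ∫ x, g x ∂(gammaMeasure μ (μ*σ)) := by
      rw [← hZ₁, integral_map hZ₁m.aemeasurable hg.aestronglyMeasurable]
    have hmap₂ : ∫ ω, g (Z₂ ω) ∂P = ∫ x, g x ∂(gammaMeasure (μ+1) (μ*σ)) := by
      rw [← hZ₂, integral_map hZ₂m.aemeasurable hg.aestronglyMeasurable]
    rw [integral_congr_ae (hmix g), integral_add h1int h2int]
    have e1 : ∫ ω, (1 - B ω) * g (Z₁ ω) ∂P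
        = (∫ ω, (1 - B ω) ∂P) * ∫ ω, g (Z₁ ω) ∂P :=
      hind₁.integral_mul_eq_mul_integral ((measurable_const.sub hB).aestronglyMeasurable)
        ((hg.comp hZ₁m).aestronglyMeasurable)
    have e2 : ∫ ω, B ω * g (Z₂ ω) ∂P
        = (∫ ω, B ω ∂P) * ∫ ω, g (Z₂ ω) ∂P :=
      hind₂.integral_mul_eq_mul_integral hB.aestronglyMeasurable ((hg.comp hZ₂m).aestronglyMeasurable)
    rw [e1, e2, hE1B, hEB, hmap₁, hmap₂]
  -- constants
  have hΓ : (0:ℝ) < Real.Gamma μ := Real.Gamma_pos_of_pos hμ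
  have hΓ1 : (0:ℝ) < Real.Gamma (μ+1) := Real.Gamma_pos_of_pos hμ1
  have hApos : (0:ℝ) < (μ*σ) ^ μ := Real.rpow_pos_of_pos hr μ
  have hA1pos : (0:ℝ) < (μ*σ) ^ (μ+1) := Real.rpow_pos_of_pos hr (μ+1)
  set c := (μ*σ) ^ μ / Real.Gamma μ with hcdef
  have hc1 : (μ*σ) ^ (μ+1) / Real.Gamma (μ+1) = σ * c := by
    rw [hcdef, Real.Gamma_add_one hμ.ne', Real.rpow_add hr, Real.rpow_one]
    field_simp
  have hδ0 : 0 ≤ δ := by rcases hδ with h | h <;> rw [h] <;> norm_num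
  -- moment formulas
  have hm3 : ∫ ω, Real.log (X ω ^ (-s)) ∂P
      = (1 - δ/(σ+δ)) * (c * J (μ*σ) μ)
        + (δ/(σ+δ)) * (σ * c * J (μ*σ) (μ+1)) := by
    have h : ∫ ω, Real.log (X ω ^ (-s)) ∂P
        = (1 - δ/(σ+δ)) * ∫ x, Real.log x ∂(gammaMeasure μ (μ*σ))
          + (δ/(σ+δ)) * ∫ x, Real.log x ∂(gammaMeasure (μ+1) (μ*σ)) :=
      hconv Real.log Real.measurable_log (integrable_log_gamma hμ hr)
        (integrable_log_gamma hμ1 hr)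
    rw [integral_log_gamma hμ hr, integral_log_gamma hμ1 hr, hc1] at h
    rw [h]
  have hm2 : ∫ ω, X ω ^ (-s) * Real.log (X ω ^ (-s)) ∂P
      = (1 - δ/(σ+δ)) * (c * J (μ*σ) (μ+1))
        + (δ/(σ+δ)) * (σ * c * J (μ*σ) (μ+2)) := by
    have h : ∫ ω, X ω ^ (-s) * Real.log (X ω ^ (-s)) ∂P
        = (1 - δ/(σ+δ)) * ∫ x, x * Real.log x ∂(gammaMeasure μ (μ*σ))
          + (δ/(σ+δ)) * ∫ x, x * Real.log x ∂(gammaMeasure (μ+1) (μ*σ)) :=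
      hconv (fun z => z * Real.log z) (measurable_id.mul Real.measurable_log)
        (integrable_mul_log_gamma hμ hr) (integrable_mul_log_gamma hμ1 hr)
    rw [integral_mul_log_gamma hμ hr, integral_mul_log_gamma hμ1 hr, hc1,
      show μ+1+1 = μ+2 from by ring] at h
    rw [h]
  have hm1 : ∫ ω, X ω ^ (-s) * Real.log (X ω ^ (-s)) / (1 + δ * X ω ^ (-s)) ∂P
      = (1 - δ/(σ+δ)) * ∫ x, x * Real.log x / (1 + δ * x) ∂(gammaMeasure μ (μ*σ))
        + (δ/(σ+δ)) * ∫ x, x * Real.log x / (1 + δ * x) ∂(gammaMeasure (μ+1) (μ*σ)) :=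
    hconv (fun z => z * Real.log z / (1 + δ * z)) (measurable_ratio δ)
      (integrable_ratio_gamma hμ hr hδ0) (integrable_ratio_gamma hμ1 hr hδ0)
  -- recurrences
  have rel1 : (μ*σ) * J (μ*σ) (μ+1) = μ * J (μ*σ) μ + Real.Gamma μ / (μ*σ) ^ μ :=
    Jrec hμ hr
  have rel2 : (μ*σ) * J (μ*σ) (μ+2)
      = (μ+1) * J (μ*σ) (μ+1) + Real.Gamma (μ+1) / (μ*σ) ^ (μ+1) := by
    have h := Jrec (b := μ+1) hμ1 hr
    rw [show μ+1+1 = μ+2 from by ring] at h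
    exact h
  have hone : c * (Real.Gamma μ / (μ*σ) ^ μ) = 1 := by
    rw [hcdef]
    field_simp
  have hone2 : (σ * c) * (Real.Gamma (μ+1) / (μ*σ) ^ (μ+1)) = 1 := by
    rw [← hc1]
    field_simp
  have rel1' : (μ*σ) * (c * J (μ*σ) (μ+1)) = μ * (c * J (μ*σ) μ) + 1 := by
    linear_combination c * rel1 + hone
  have rel2' : (μ*σ) * (σ * c * J (μ*σ) (μ+2))
      = (μ+1) * (σ * c * J (μ*σ) (μ+1)) + 1 := by
    linear_combination (σ * c) * rel2 + hone2
  -- case split on δ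
  rcases hδ with h0 | h1
  · subst h0
    rw [hm2, hm3]
    simp only [zero_div, add_zero, zero_mul, mul_zero, sub_zero, one_mul, zero_add]
    linear_combination rel1'
  · subst h1
    rw [hm2, hm3, hm1]
    have hσ1 : σ + 1 ≠ 0 := by positivity
    have hcomb : σ * ∫ z, z * Real.log z / (1 + 1 * z) ∂(gammaMeasure μ (μ*σ))
        + ∫ z, z * Real.log z / (1 + 1 * z) ∂(gammaMeasure (μ+1) (μ*σ))
        = σ * (c * J (μ*σ) (μ+1)) := by
      have h := ratio_combine hμ hσ
      rw [integral_mul_log_gamma hμ hr] at h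
      simpa only [one_mul] using h
    set q := 1/(σ+1) with hqdef
    have hσ1 : (σ:ℝ) + 1 ≠ 0 := by positivity
    have hq : q * (σ+1) = 1 := by rw [hqdef]; field_simp
    have h1q : 1 - q = σ * q := by rw [hqdef]; field_simp; ring
    rw [h1q]
    linear_combination q * rel2' + (σ*q) * rel1' - q * hcomb + hq
end
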